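/- arXiv:math/9606229 — 5 statements merged into one kernel-verified Lean document; each statement's English description precedes it below -/
import Mathlib

section
/- Let κ be an infinite cardinal, I a proper ideal on κ, δ a limit ordinal with cf(δ) > κ⁺, and ⟨f_α : α < δ⟩ a <_I-increasing sequence of functions from κ to the ordinals. Then the following are equivalent: (a) there are an unbounded set A ⊆ δ and sets s_α ∈ I for α ∈ A such that for each i < κ the values f_α(i), for α ∈ A with i ∉ s_α, are strictly increasing in α; (b) ⟨f_α : α < δ⟩ has a <_I-exact upper bound f with cf(f(i)) > κ for every i < κ and {i < κ : cf(f(i)) ≠ cf(δ)} ∈ I. -/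
open Cardinal Set

noncomputable section

/-- The `β`-th iterated cardinal successor of `χ`. -/
noncomputable def succIter (χ : Cardinal.{0}) (β : Ordinal.{0}) : Cardinal :=
  Ordinal.limitRecOn β χ (fun _ ih => Order.succ ih)
    (fun β _ ih => ⨆ γ : Iio β, ih γ.1 γ.2)

/-- `J` is a proper ideal on `{i : i < κ}`. -/
structure IsIdealOn (κ : Ordinal.{0}) (J : Set (Set Ordinal)) : Prop where
  subset_mem : ∀ s ∈ J, s ⊆ Iio κ
  empty_mem : ∅ ∈ J
  mono : ∀ s ∈ J, ∀ t ⊆ s, t ∈ J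
  union_mem : ∀ s ∈ J, ∀ t ∈ J, s ∪ t ∈ J
  proper : Iio κ ∉ J

/-- The ideal of bounded subsets of `κ`. -/
def boundedIdeal (κ : Ordinal.{0}) : Set (Set Ordinal) := {s | ∃ j < κ, s ⊆ Iio j}

/-- `J` is `θ`-complete: closed under unions of fewer than `θ` of its members. -/
def IsCompleteIdeal (θ : Cardinal.{0}) (J : Set (Set Ordinal)) : Prop :=
  ∀ S : Set (Set Ordinal), S ⊆ J → #S < Cardinal.lift.{1,0} θ → ⋃₀ S ∈ J

/-- `f <_J g` : `{i < κ : f i ≥ g i} ∈ J`. -/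
def ltMod (κ : Ordinal.{0}) (J : Set (Set Ordinal)) (f g : Ordinal → Ordinal) : Prop :=
  {i | i < κ ∧ g i ≤ f i} ∈ J

/-- `h` is a `<_J`-exact upper bound of `⟨f α : α < δ⟩`. -/
def IsEub (κ : Ordinal.{0}) (J : Set (Set Ordinal)) (δ : Ordinal.{0})
    (f : Ordinal → Ordinal → Ordinal) (h : Ordinal → Ordinal) : Prop :=
  (∀ α < δ, ltMod κ J (f α) h) ∧
    ∀ g : Ordinal → Ordinal, ltMod κ J g h → ∃ α < δ, ltMod κ J g (f α)

/-- `D` is an ultrafilter on `{i : i < κ}`. -/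
structure IsUltrafilterOn (κ : Ordinal.{0}) (D : Set (Set Ordinal)) : Prop where
  subset_mem : ∀ s ∈ D, s ⊆ Iio κ
  inter_mem : ∀ s ∈ D, ∀ t ∈ D, s ∩ t ∈ D
  superset_mem : ∀ s ∈ D, ∀ t, t ⊆ Iio κ → s ⊆ t → t ∈ D
  empty_not_mem : ∅ ∉ D
  ultra : ∀ s, s ⊆ Iio κ → s ∈ D ∨ Iio κ \ s ∈ D

/-- `f <_D g` : `{i < κ : f i < g i} ∈ D`. -/
def ltModD (κ : Ordinal.{0}) (D : Set (Set Ordinal)) (f g : Ordinal → Ordinal) : Prop :=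
  {i | i < κ ∧ f i < g i} ∈ D

/-- `δ` is a good point for the sequence `f` (with respect to the ideal `J` on `κ`). -/
def IsGoodPt (κ : Ordinal.{0}) (J : Set (Set Ordinal)) (f : Ordinal → Ordinal → Ordinal)
    (δ : Ordinal.{0}) : Prop :=
  ∃ A : Set Ordinal, A ⊆ Iio δ ∧ (∀ β < δ, ∃ α ∈ A, β < α) ∧
    ∃ s : Ordinal → Set Ordinal, (∀ α ∈ A, s α ∈ J) ∧
      ∀ i < κ, ∀ α ∈ A, ∀ β ∈ A, α < β → i ∉ s α → i ∉ s β → f α i < f β i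

/-- `δ` is a weakly good point for `f`. -/
def IsWeaklyGoodPt (κ : Ordinal.{0}) (J : Set (Set Ordinal)) (f : Ordinal → Ordinal → Ordinal)
    (δ : Ordinal.{0}) : Prop :=
  ∃ t : Set Ordinal, t ⊆ Iio κ ∧ t ∉ J ∧
    ∃ A : Set Ordinal, A ⊆ Iio δ ∧ (∀ β < δ, ∃ α ∈ A, β < α) ∧
      ∃ s : Ordinal → Set Ordinal, (∀ α ∈ A, s α ∈ J) ∧
        ∀ i ∈ t, ∀ α ∈ A, ∀ β ∈ A, α < β → i ∉ s α → i ∉ s β → f α i < f β i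

/-- `δ` is a chaotic point for `f`. -/
def IsChaoticPt (κ : Ordinal.{0}) (J : Set (Set Ordinal)) (f : Ordinal → Ordinal → Ordinal)
    (δ : Ordinal.{0}) : Prop :=
  (∃ D : Set (Set Ordinal), IsUltrafilterOn κ D ∧ (∀ s ∈ J, s ∉ D) ∧
    ∃ a : Ordinal → Set Ordinal, (∀ i < κ, #(a i) ≤ Cardinal.lift.{1,0} κ.card) ∧
      ∀ α < δ, ∃ β, α < β ∧ β < δ ∧ ∃ g : Ordinal → Ordinal,
        (∀ i < κ, g i ∈ a i) ∧ ltModD κ D (f α) g ∧ ltModD κ D g (f β)) ∨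
  (∃ A : Set Ordinal, A ⊆ Iio δ ∧ (∀ β < δ, ∃ α ∈ A, β < α) ∧
    ∃ g : Ordinal → Ordinal, ∀ α ∈ A, ∀ β ∈ A, α < β →
      {i | i < κ ∧ f β i ≤ g i} \ {i | i < κ ∧ f α i ≤ g i} ∈ J ∧
      {i | i < κ ∧ f α i ≤ g i} \ {i | i < κ ∧ f β i ≤ g i} ∉ J)

/-- The set of good points `δ < λ⁺` with `κ < cf δ < λ`. -/
def Sgd (κ lam : Cardinal.{0}) (J : Set (Set Ordinal)) (f : Ordinal → Ordinal → Ordinal) :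
    Set Ordinal :=
  {δ | δ < (Order.succ lam).ord ∧ Order.IsSuccLimit δ ∧ κ < δ.cof ∧ δ.cof < lam ∧ IsGoodPt κ.ord J f δ}

/-- The set of bad points `δ < λ⁺` with `κ < cf δ < λ`. -/
def Sbd (κ lam : Cardinal.{0}) (J : Set (Set Ordinal)) (f : Ordinal → Ordinal → Ordinal) :
    Set Ordinal :=
  {δ | δ < (Order.succ lam).ord ∧ Order.IsSuccLimit δ ∧ κ < δ.cof ∧ δ.cof < lam ∧
    (∃ h : Ordinal → Ordinal, IsEub κ.ord J δ f h ∧ {i | i < κ.ord ∧ (h i).cof ≤ κ} ∈ J) ∧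
    ¬ IsGoodPt κ.ord J f δ}

/-- The set of chaotic points `δ < λ⁺` with `κ < cf δ < λ`. -/
def Sch (κ lam : Cardinal.{0}) (J : Set (Set Ordinal)) (f : Ordinal → Ordinal → Ordinal) :
    Set Ordinal :=
  {δ | δ < (Order.succ lam).ord ∧ Order.IsSuccLimit δ ∧ κ < δ.cof ∧ δ.cof < lam ∧ IsChaoticPt κ.ord J f δ}

/-- `C` is a club (closed unbounded) subset of `δ`. -/
def IsClubIn (C : Set Ordinal) (δ : Ordinal.{0}) : Prop :=
  C ⊆ Iio δ ∧ (∀ α < δ, ∃ β ∈ C, α < β) ∧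
    ∀ α < δ, 0 < α → (∀ β < α, ∃ γ ∈ C, β < γ ∧ γ < α) → α ∈ C

/-- `S` is stationary in `δ`. -/
def IsStationaryIn (S : Set Ordinal) (δ : Ordinal.{0}) : Prop :=
  ∀ C : Set Ordinal, IsClubIn C δ → (S ∩ C).Nonempty

/-- `(∏_{i<κ} θs i, <_J)` has true cofinality `σ`. -/
def HasTrueCofinality (κ : Ordinal.{0}) (J : Set (Set Ordinal)) (θs : Ordinal → Cardinal)
    (σ : Cardinal.{0}) : Prop :=
  σ.IsRegular ∧ ∃ g : Ordinal → Ordinal → Ordinal,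
    (∀ ξ < σ.ord, ∀ i < κ, g ξ i < (θs i).ord) ∧
    (∀ ξ < σ.ord, ∀ ξ' < σ.ord, ξ < ξ' → ltMod κ J (g ξ) (g ξ')) ∧
    ∀ h : Ordinal → Ordinal, (∀ i < κ, h i < (θs i).ord) → ∃ ξ < σ.ord, ltMod κ J h (g ξ)

/-- `S_{<θ}(X)` : the subsets of `X` of cardinality `< θ`. -/
def SetLt (θ : Cardinal.{0}) (X : Set Ordinal) : Set (Set Ordinal) :=
  {a | a ⊆ X ∧ #a < Cardinal.lift.{1,0} θ}

/-- `C` is a club in `S_{<θ}(X)` : cofinal and closed under unions of increasing chains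
of length `< θ`. -/
def IsClubInSetLt (θ : Cardinal.{0}) (X : Set Ordinal) (C : Set (Set Ordinal)) : Prop :=
  C ⊆ SetLt θ X ∧ (∀ a ∈ SetLt θ X, ∃ b ∈ C, a ⊆ b) ∧
    ∀ β : Ordinal, 0 < β → β < θ.ord → ∀ c : Ordinal → Set Ordinal,
      (∀ i < β, c i ∈ C) → (∀ i < β, ∀ j < β, i ≤ j → c i ⊆ c j) →
      (⋃ i ∈ Iio β, c i) ∈ C

/-- `S` is stationary in `S_{<θ}(X)`. -/
def IsStationaryInSetLt (θ : Cardinal.{0}) (X : Set Ordinal) (S : Set (Set Ordinal)) : Prop :=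
  ∀ C : Set (Set Ordinal), IsClubInSetLt θ X C → (S ∩ C).Nonempty

/-- `NPT(λ, θ)` : there is a family `⟨A i : i < λ⟩` of subsets of `λ`, each of cardinality
`≤ θ`, with no transversal, while every proper initial segment has a transversal. -/
def NPT (lam θ : Cardinal.{0}) : Prop :=
  ∃ A : Ordinal → Set Ordinal,
    (∀ i < lam.ord, A i ⊆ Iio lam.ord ∧ #(A i) ≤ Cardinal.lift.{1,0} θ) ∧
    (¬ ∃ F : Ordinal → Ordinal, (∀ i < lam.ord, F i ∈ A i) ∧ InjOn F (Iio lam.ord)) ∧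
    ∀ α < lam.ord, ∃ F : Ordinal → Ordinal, (∀ i < α, F i ∈ A i) ∧ InjOn F (Iio α)

end

namespace SH16B
open Ordinal
open scoped Classical

noncomputable def recChoose (P : (ξ : Ordinal.{0}) → (∀ η < ξ, Ordinal.{0}) → Ordinal.{0} → Prop) :
    Ordinal.{0} → Ordinal.{0} :=
  WellFounded.fix wellFounded_lt fun ξ ih =>
    if H : ∃ a, P ξ (fun η hη => ih η hη) a then H.choose else 0

theorem recChoose_eq (P : (ξ : Ordinal.{0}) → (∀ η < ξ, Ordinal.{0}) → Ordinal.{0} → Prop) (ξ : Ordinal.{0}) :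
    recChoose P ξ = if H : ∃ a, P ξ (fun η _ => recChoose P η) a then H.choose else 0 :=
  WellFounded.fix_eq _ _ _

theorem recChoose_spec (P : (ξ : Ordinal.{0}) → (∀ η < ξ, Ordinal.{0}) → Ordinal.{0} → Prop) (ξ : Ordinal.{0}) (H : ∃ a, P ξ (fun η _ => recChoose P η) a) :
    P ξ (fun η _ => recChoose P η) (recChoose P ξ) := by
  rw [recChoose_eq, dif_pos H]; exact H.choose_spec

theorem exists_cofinal_seq (x : Ordinal.{0}) (μ : Cardinal.{0}) (hμ : ℵ₀ ≤ μ) (hx : x.cof = μ) :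
    ∃ e : Ordinal.{0} → Ordinal.{0}, (∀ ξ < μ.ord, e ξ < x) ∧
      (∀ ξ, ξ < μ.ord → ∀ ζ, ζ < μ.ord → ξ ≤ ζ → e ξ ≤ e ζ) ∧
      (∀ y < x, ∃ ξ < μ.ord, y < e ξ) := by
  obtain ⟨s, hs⟩ := Ordinal.exists_fundamental_sequence x
  have hxo : x.cof.ord = μ.ord := by rw [hx]
  refine ⟨fun ξ => if hξ : ξ < x.cof.ord then s ξ hξ else 0, ?_, ?_, ?_⟩
  · intro ξ hξ
    rw [← hxo] at hξ
    dsimp only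
    rw [dif_pos hξ]
    exact hs.lt hξ
  · intro ξ hξ ζ hζ hle
    rw [← hxo] at hξ hζ
    dsimp only
    rw [dif_pos hξ, dif_pos hζ]
    exact hs.monotone hξ hζ hle
  · intro y hy
    rw [← hs.blsub_eq] at hy
    obtain ⟨ξ, hξ, hyle⟩ := Ordinal.lt_blsub_iff.1 hy
    have hlim : Order.IsSuccLimit x.cof.ord := by rw [hxo]; exact Cardinal.isSuccLimit_ord hμ
    have hξ1 : Order.succ ξ < x.cof.ord := hlim.succ_lt hξ
    refine ⟨Order.succ ξ, by rw [← hxo]; exact hξ1, ?_⟩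
    dsimp only
    rw [dif_pos hξ1]
    exact hyle.trans_lt (hs.strict_mono hξ hξ1 (Order.lt_succ ξ))

theorem union3_mem {κ : Ordinal.{0}} {I : Set (Set Ordinal.{0})} (hI : IsIdealOn κ I)
    {X Y Z W : Set Ordinal.{0}} (hX : X ∈ I) (hY : Y ∈ I) (hZ : Z ∈ I)
    (hW : W ⊆ X ∪ Y ∪ Z) : W ∈ I :=
  hI.mono _ (hI.union_mem _ (hI.union_mem _ hX _ hY) _ hZ) _ hW

noncomputable def seqA (A : Set Ordinal.{0}) (dfun : Ordinal → Ordinal) : Ordinal → Ordinal :=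
  recChoose (fun ξ prev a => a ∈ A ∧ dfun ξ < a ∧ Ordinal.bsup ξ prev < a)

theorem seqA_spec (A : Set Ordinal.{0}) (dfun : Ordinal → Ordinal) (ξ : Ordinal)
    (H : ∃ a, a ∈ A ∧ dfun ξ < a ∧ Ordinal.bsup ξ (fun η _ => seqA A dfun η) < a) :
    seqA A dfun ξ ∈ A ∧ dfun ξ < seqA A dfun ξ ∧
      Ordinal.bsup ξ (fun η _ => seqA A dfun η) < seqA A dfun ξ :=
  recChoose_spec (fun ξ prev a => a ∈ A ∧ dfun ξ < a ∧ Ordinal.bsup ξ prev < a) ξ H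

noncomputable def seqB (δ : Ordinal.{0}) (dfun : Ordinal → Ordinal) (κo : Ordinal)
    (I : Set (Set Ordinal)) (f : Ordinal → Ordinal → Ordinal)
    (e : Ordinal → Ordinal → Ordinal) (Z : Ordinal → Ordinal) : Ordinal → Ordinal :=
  recChoose (fun ξ prev a => a < δ ∧ dfun ξ < a ∧ Ordinal.bsup ξ prev < a ∧
    ltMod κo I (fun i => e i (Ordinal.bsup ξ (fun η hη => Order.succ (Z (prev η hη))))) (f a))

theorem seqB_spec (δ : Ordinal.{0}) (dfun : Ordinal → Ordinal) (κo : Ordinal)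
    (I : Set (Set Ordinal)) (f : Ordinal → Ordinal → Ordinal)
    (e : Ordinal → Ordinal → Ordinal) (Z : Ordinal → Ordinal) (ξ : Ordinal)
    (H : ∃ a, a < δ ∧ dfun ξ < a ∧
      Ordinal.bsup ξ (fun η _ => seqB δ dfun κo I f e Z η) < a ∧
      ltMod κo I (fun i => e i (Ordinal.bsup ξ
        (fun η _ => Order.succ (Z (seqB δ dfun κo I f e Z η))))) (f a)) :
    (seqB δ dfun κo I f e Z ξ < δ ∧ dfun ξ < seqB δ dfun κo I f e Z ξ ∧
      Ordinal.bsup ξ (fun η _ => seqB δ dfun κo I f e Z η) < seqB δ dfun κo I f e Z ξ ∧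
      ltMod κo I (fun i => e i (Ordinal.bsup ξ
        (fun η _ => Order.succ (Z (seqB δ dfun κo I f e Z η))))) (f (seqB δ dfun κo I f e Z ξ))) :=
  recChoose_spec (fun ξ prev a => a < δ ∧ dfun ξ < a ∧ Ordinal.bsup ξ prev < a ∧
    ltMod κo I (fun i => e i (Ordinal.bsup ξ (fun η hη => Order.succ (Z (prev η hη))))) (f a)) ξ H


theorem good_to_eub (κ : Cardinal.{0}) (hκ : ℵ₀ ≤ κ)
    (I : Set (Set Ordinal.{0})) (hI : IsIdealOn κ.ord I)
    (δ : Ordinal.{0}) (hδ : Order.IsSuccLimit δ) (hcof : Order.succ κ < δ.cof)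
    (f : Ordinal.{0} → Ordinal.{0} → Ordinal.{0})
    (hinc : ∀ α < δ, ∀ β < δ, α < β → ltMod κ.ord I (f α) (f β))
    (hg : IsGoodPt κ.ord I f δ) :
    ∃ h : Ordinal.{0} → Ordinal.{0}, IsEub κ.ord I δ f h ∧
      (∀ i < κ.ord, κ < (h i).cof) ∧
      {i | i < κ.ord ∧ (h i).cof ≠ δ.cof} ∈ I := by
  classical
  obtain ⟨A, hAsub, hAunb, s, hsI, hgood⟩ := hg
  have hμreg : (δ.cof).IsRegular := Cardinal.isRegular_cof hδ
  have hμord : (δ.cof).ord.cof = δ.cof := hμreg.cof_eq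
  have hκμ : κ < δ.cof := (Order.lt_succ κ).trans hcof
  have hμℵ : ℵ₀ ≤ δ.cof := hμreg.aleph0_le
  have hμlim : Order.IsSuccLimit (δ.cof).ord := Cardinal.isSuccLimit_ord hμℵ
  obtain ⟨d0, hd0⟩ := Ordinal.exists_fundamental_sequence δ
  set dfun : Ordinal → Ordinal := fun ξ => if hξ : ξ < δ.cof.ord then d0 ξ hξ else 0 with hdfun
  have hdlt : ∀ ξ < δ.cof.ord, dfun ξ < δ := by
    intro ξ hξ; rw [hdfun]; dsimp only; rw [dif_pos hξ]; exact hd0.lt hξ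
  have hdcof : ∀ x < δ, ∃ ξ, ξ < δ.cof.ord ∧ x ≤ dfun ξ := by
    intro x hx
    rw [← hd0.blsub_eq] at hx
    obtain ⟨ξ, hξ, hle⟩ := Ordinal.lt_blsub_iff.1 hx
    exact ⟨ξ, hξ, by rw [hdfun]; dsimp only; rw [dif_pos hξ]; exact hle⟩
  set α : Ordinal → Ordinal := seqA A dfun with hα
  have key : ∀ ξ, ξ < δ.cof.ord → (α ξ ∈ A ∧ dfun ξ < α ξ ∧ ∀ η < ξ, α η < α ξ) := by
    intro ξ
    induction ξ using Ordinal.induction with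
    | h ξ IH =>
      intro hξ
      have hbsup : Ordinal.bsup ξ (fun η _ => α η) < δ :=
        Ordinal.bsup_lt_ord (Cardinal.lt_ord.1 hξ) (fun η hη => hAsub (IH η hη (hη.trans hξ)).1)
      obtain ⟨a, haA, ha⟩ := hAunb (max (dfun ξ) (Ordinal.bsup ξ (fun η _ => α η)))
        (max_lt (hdlt ξ hξ) hbsup)
      have spec := seqA_spec A dfun ξ ⟨a, haA, (le_max_left _ _).trans_lt ha,
        (le_max_right _ _).trans_lt ha⟩
      exact ⟨spec.1, spec.2.1, fun η hη =>
        (Ordinal.le_bsup (fun η _ => α η) η hη).trans_lt spec.2.2⟩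
  have hαA : ∀ ξ, ξ < δ.cof.ord → α ξ ∈ A := fun ξ hξ => (key ξ hξ).1
  have hαδ : ∀ ξ, ξ < δ.cof.ord → α ξ < δ := fun ξ hξ => hAsub (hαA ξ hξ)
  have hαmono : ∀ η ξ, η < ξ → ξ < δ.cof.ord → α η < α ξ :=
    fun η ξ hηξ hξ => (key ξ hξ).2.2 η hηξ
  set T : Set Ordinal :=
    {i | i < κ.ord ∧ ∀ η < δ.cof.ord, ∃ ξ, η < ξ ∧ ξ < δ.cof.ord ∧ i ∉ s (α ξ)} with hT
  have hTmem : ∀ i, i ∈ T ↔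
      (i < κ.ord ∧ ∀ η < δ.cof.ord, ∃ ξ, η < ξ ∧ ξ < δ.cof.ord ∧ i ∉ s (α ξ)) :=
    fun i => Iff.rfl
  set G : Ordinal → Ordinal → Ordinal := fun i ξ => if i ∈ s (α ξ) then 0 else f (α ξ) i with hG
  have hGpos : ∀ i ξ, i ∉ s (α ξ) → G i ξ = f (α ξ) i := by
    intro i ξ hmem; rw [hG]; dsimp only; rw [if_neg hmem]
  have hGzero : ∀ i ξ, i ∈ s (α ξ) → G i ξ = 0 := by
    intro i ξ hmem; rw [hG]; dsimp only; rw [if_pos hmem]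
  set h : Ordinal → Ordinal := fun i =>
    if i ∈ T then Ordinal.bsup δ.cof.ord (fun ξ _ => G i ξ) else (Order.succ κ).ord with hh
  have hh_eq : ∀ i ∈ T, h i = Ordinal.bsup δ.cof.ord (fun ξ _ => G i ξ) := by
    intro i hi; rw [hh]; dsimp only; rw [if_pos hi]
  have hchain : ∀ i, i < κ.ord → ∀ η ξ, η < ξ → ξ < δ.cof.ord →
      i ∉ s (α η) → i ∉ s (α ξ) → f (α η) i < f (α ξ) i := by
    intro i hi η ξ hηξ hξ hsη hsξ
    exact hgood i hi (α η) (hαA η (hηξ.trans hξ)) (α ξ) (hαA ξ hξ) (hαmono η ξ hηξ hξ) hsη hsξ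
  have hlt_h : ∀ i ∈ T, ∀ ξ, ξ < δ.cof.ord → i ∉ s (α ξ) → f (α ξ) i < h i := by
    intro i hiT ξ hξ hns
    obtain ⟨ξ', hgt, hξ', hns'⟩ := ((hTmem i).1 hiT).2 ξ hξ
    have h1 : f (α ξ) i < f (α ξ') i := hchain i ((hTmem i).1 hiT).1 ξ ξ' hgt hξ' hns hns'
    rw [hh_eq i hiT]
    calc f (α ξ) i < f (α ξ') i := h1
      _ = G i ξ' := (hGpos i ξ' hns').symm
      _ ≤ _ := Ordinal.le_bsup _ ξ' hξ'
  have hpos : ∀ i ∈ T, 0 < h i := by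
    intro i hiT
    obtain ⟨ξ₁, h01, hξ₁, hns₁⟩ := ((hTmem i).1 hiT).2 0 hμlim.pos
    exact (lt_of_le_of_lt (by simp) (hlt_h i hiT ξ₁ hξ₁ hns₁))
  have hGlt : ∀ i ∈ T, ∀ ξ, ξ < δ.cof.ord → G i ξ < h i := by
    intro i hiT ξ hξ
    by_cases hmem : i ∈ s (α ξ)
    · rw [hGzero i ξ hmem]; exact hpos i hiT
    · rw [hGpos i ξ hmem]; exact hlt_h i hiT ξ hξ hmem
  have hTc : {i | i < κ.ord ∧ i ∉ T} ∈ I := by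
    have hex : ∀ i, ∃ η, η < δ.cof.ord ∧
        (i < κ.ord → i ∉ T → ∀ ξ, η < ξ → ξ < δ.cof.ord → i ∈ s (α ξ)) := by
      intro i
      by_cases hc : i < κ.ord ∧ i ∉ T
      · have hnot : ¬ ∀ η < δ.cof.ord, ∃ ξ, η < ξ ∧ ξ < δ.cof.ord ∧ i ∉ s (α ξ) := by
          intro hcon; exact hc.2 ((hTmem i).2 ⟨hc.1, hcon⟩)
        push_neg at hnot
        obtain ⟨η, hη, hall⟩ := hnot
        exact ⟨η, hη, fun _ _ => hall⟩
      · exact ⟨0, hμlim.pos, fun h1 h2 => absurd ⟨h1, h2⟩ hc⟩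
    choose η0 hη0a hη0b using hex
    have hbs : Ordinal.bsup κ.ord (fun i _ => η0 i) < δ.cof.ord := by
      refine Ordinal.bsup_lt_ord ?_ (fun i _ => hη0a i)
      rw [Cardinal.card_ord, hμord]; exact hκμ
    have hξs : Order.succ (Ordinal.bsup κ.ord (fun i _ => η0 i)) < δ.cof.ord :=
      hμlim.succ_lt hbs
    refine hI.mono _ (hsI (α _) (hαA _ hξs)) _ ?_
    intro i hi
    exact hη0b i hi.1 hi.2 _ ((Ordinal.le_bsup _ i hi.1).trans_lt (Order.lt_succ _)) hξs
  have hcofT : ∀ i ∈ T, (h i).cof = δ.cof := by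
    intro i hiT
    have hle : (h i).cof ≤ δ.cof := by
      rw [hh_eq i hiT]
      have := Ordinal.cof_bsup_le (fun ξ hξ => by
        rw [← hh_eq i hiT]; exact hGlt i hiT ξ hξ)
      rwa [Cardinal.card_ord] at this
    refine le_antisymm hle ?_
    obtain ⟨ι, g, hglsub, hgcard⟩ := Ordinal.exists_lsub_cof (h i)
    have hgi : ∀ j, ∃ ξ, ξ < δ.cof.ord ∧ i ∉ s (α ξ) ∧ g j < f (α ξ) i := by
      intro j
      have hj : g j < h i := by rw [← hglsub]; exact Ordinal.lt_lsub g j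
      rw [hh_eq i hiT] at hj
      obtain ⟨ξ, hξ, hlt⟩ := (Ordinal.lt_bsup _).1 hj
      by_cases hmem : i ∈ s (α ξ)
      · exfalso
        rw [hGzero i ξ hmem] at hlt
        exact absurd hlt (by simp)
      · rw [hGpos i ξ hmem] at hlt
        exact ⟨ξ, hξ, hmem, hlt⟩
    choose p hp1 hp2 hp3 using hgi
    have hub2 : δ.cof.ord ≤ Ordinal.lsub p := by
      by_contra hcon
      push_neg at hcon
      obtain ⟨ξ₀, hgt, hξ₀, hns₀⟩ := ((hTmem i).1 hiT).2 (Ordinal.lsub p) hcon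
      have hfh : f (α ξ₀) i < h i := hlt_h i hiT ξ₀ hξ₀ hns₀
      rw [← hglsub] at hfh
      obtain ⟨j, hj⟩ := Ordinal.lt_lsub_iff.1 hfh
      have hlt2 : f (α ξ₀) i < f (α (p j)) i := hj.trans_lt (hp3 j)
      have hpj : ξ₀ < p j := by
        by_contra hle2
        push_neg at hle2
        rcases lt_or_eq_of_le hle2 with hlt3 | heq
        · exact absurd hlt2
            (lt_asymm (hchain i ((hTmem i).1 hiT).1 (p j) ξ₀ hlt3 hξ₀ (hp2 j) hns₀))
        · rw [heq] at hlt2; exact lt_irrefl _ hlt2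
      exact lt_irrefl _ ((hgt.trans hpj).trans (Ordinal.lt_lsub p j))
    have heq : Ordinal.lsub p = δ.cof.ord :=
      le_antisymm (Ordinal.lsub_le (fun j => hp1 j)) hub2
    have hfin := Ordinal.cof_lsub_le p
    rw [heq, hμord] at hfin
    exact hfin.trans (le_of_eq hgcard)
  have hcofgt : ∀ i < κ.ord, κ < (h i).cof := by
    intro i hi
    by_cases hiT : i ∈ T
    · rw [hcofT i hiT]; exact hκμ
    · have hhe : h i = (Order.succ κ).ord := by rw [hh]; dsimp only; rw [if_neg hiT]
      rw [hhe, (Cardinal.isRegular_succ hκ).cof_eq]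
      exact Order.lt_succ κ
  have hne : {i | i < κ.ord ∧ (h i).cof ≠ δ.cof} ∈ I := by
    refine hI.mono _ hTc _ ?_
    intro i hi
    exact ⟨hi.1, fun hiT => hi.2 (hcofT i hiT)⟩
  have hub : ∀ a, a < δ → ltMod κ.ord I (f a) h := by
    intro a ha
    obtain ⟨ξ₀, hξ₀, hle⟩ := hdcof a ha
    have haα : a < α ξ₀ := hle.trans_lt (key ξ₀ hξ₀).2.1
    have h1 : {i | i < κ.ord ∧ f (α ξ₀) i ≤ f a i} ∈ I := hinc a ha (α ξ₀) (hαδ ξ₀ hξ₀) haα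
    show {i | i < κ.ord ∧ h i ≤ f a i} ∈ I
    refine union3_mem hI h1 (hsI (α ξ₀) (hαA ξ₀ hξ₀)) hTc ?_
    intro i hi
    by_cases hiT : i ∈ T
    · by_cases hmem : i ∈ s (α ξ₀)
      · exact Or.inl (Or.inr hmem)
      · exact Or.inl (Or.inl ⟨hi.1, le_of_lt ((hlt_h i hiT ξ₀ hξ₀ hmem).trans_le hi.2)⟩)
    · exact Or.inr ⟨hi.1, hiT⟩
  have hexact : ∀ g : Ordinal → Ordinal, ltMod κ.ord I g h →
      ∃ a, a < δ ∧ ltMod κ.ord I g (f a) := by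
    intro g hg
    have hg' : {i | i < κ.ord ∧ h i ≤ g i} ∈ I := hg
    have hgi : ∀ i, ∃ ξ, ξ < δ.cof.ord ∧
        (i ∈ T → ¬ h i ≤ g i → (i ∉ s (α ξ) ∧ g i < f (α ξ) i)) := by
      intro i
      by_cases hc : i ∈ T ∧ ¬ h i ≤ g i
      · have hlt : g i < h i := not_le.1 hc.2
        rw [hh_eq i hc.1] at hlt
        obtain ⟨ξ, hξ, hlt2⟩ := (Ordinal.lt_bsup _).1 hlt
        by_cases hmem : i ∈ s (α ξ)
        · exfalso; rw [hGzero i ξ hmem] at hlt2; exact absurd hlt2 (by simp)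
        · rw [hGpos i ξ hmem] at hlt2
          exact ⟨ξ, hξ, fun _ _ => ⟨hmem, hlt2⟩⟩
      · exact ⟨0, hμlim.pos, fun h1 h2 => absurd ⟨h1, h2⟩ hc⟩
    choose q hq1 hq2 using hgi
    have hbs : Ordinal.bsup κ.ord (fun i _ => q i) < δ.cof.ord := by
      refine Ordinal.bsup_lt_ord ?_ (fun i _ => hq1 i)
      rw [Cardinal.card_ord, hμord]; exact hκμ
    have hξs : Order.succ (Ordinal.bsup κ.ord (fun i _ => q i)) < δ.cof.ord :=
      hμlim.succ_lt hbs
    refine ⟨α _, hαδ _ hξs, ?_⟩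
    show {i | i < κ.ord ∧ f (α (Order.succ (Ordinal.bsup κ.ord (fun i _ => q i)))) i ≤ g i} ∈ I
    refine union3_mem hI hg' (hsI (α _) (hαA _ hξs)) hTc ?_
    intro i hi
    by_cases hiT : i ∈ T
    · by_cases hgle : h i ≤ g i
      · exact Or.inl (Or.inl ⟨hi.1, hgle⟩)
      · by_cases hmem : i ∈ s (α (Order.succ (Ordinal.bsup κ.ord (fun i _ => q i))))
        · exact Or.inl (Or.inr hmem)
        · exfalso
          obtain ⟨hns, hlt⟩ := hq2 i hiT hgle
          have hqlt : q i < Order.succ (Ordinal.bsup κ.ord (fun i _ => q i)) :=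
            (Ordinal.le_bsup _ i hi.1).trans_lt (Order.lt_succ _)
          have hst : f (α (q i)) i < f (α _) i := hchain i hi.1 (q i) _ hqlt hξs hns hmem
          exact absurd hi.2 (not_le.2 (hlt.trans hst))
    · exact Or.inr ⟨hi.1, hiT⟩
  exact ⟨h, ⟨hub, hexact⟩, hcofgt, hne⟩

theorem eub_to_good (κ : Cardinal.{0}) (hκ : ℵ₀ ≤ κ)
    (I : Set (Set Ordinal.{0})) (hI : IsIdealOn κ.ord I)
    (δ : Ordinal.{0}) (hδ : Order.IsSuccLimit δ) (hcof : Order.succ κ < δ.cof)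
    (f : Ordinal.{0} → Ordinal.{0} → Ordinal.{0})
    (hinc : ∀ α < δ, ∀ β < δ, α < β → ltMod κ.ord I (f α) (f β))
    (h : Ordinal.{0} → Ordinal.{0}) (heub : IsEub κ.ord I δ f h)
    (hne : {i | i < κ.ord ∧ (h i).cof ≠ δ.cof} ∈ I) :
    IsGoodPt κ.ord I f δ := by
  classical
  obtain ⟨hub, hexact⟩ := heub
  have hμreg : (δ.cof).IsRegular := Cardinal.isRegular_cof hδ
  have hμord : (δ.cof).ord.cof = δ.cof := hμreg.cof_eq
  have hκμ : κ < δ.cof := (Order.lt_succ κ).trans hcof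
  have hμℵ : ℵ₀ ≤ δ.cof := hμreg.aleph0_le
  have hμlim : Order.IsSuccLimit (δ.cof).ord := Cardinal.isSuccLimit_ord hμℵ
  obtain ⟨d0, hd0⟩ := Ordinal.exists_fundamental_sequence δ
  set dfun : Ordinal → Ordinal := fun ξ => if hξ : ξ < δ.cof.ord then d0 ξ hξ else 0 with hdfun
  have hdlt : ∀ ξ < δ.cof.ord, dfun ξ < δ := by
    intro ξ hξ; rw [hdfun]; dsimp only; rw [dif_pos hξ]; exact hd0.lt hξ
  have hdcof : ∀ x < δ, ∃ ξ, ξ < δ.cof.ord ∧ x ≤ dfun ξ := by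
    intro x hx
    rw [← hd0.blsub_eq] at hx
    obtain ⟨ξ, hξ, hle⟩ := Ordinal.lt_blsub_iff.1 hx
    exact ⟨ξ, hξ, by rw [hdfun]; dsimp only; rw [dif_pos hξ]; exact hle⟩
  have he : ∀ i, ∃ e : Ordinal → Ordinal, ((h i).cof = δ.cof →
      ((∀ ξ < δ.cof.ord, e ξ < h i) ∧
       (∀ ξ, ξ < δ.cof.ord → ∀ ζ, ζ < δ.cof.ord → ξ ≤ ζ → e ξ ≤ e ζ) ∧
       (∀ y < h i, ∃ ξ < δ.cof.ord, y < e ξ))) := by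
    intro i
    by_cases hc : (h i).cof = δ.cof
    · obtain ⟨e, h1, h2, h3⟩ := exists_cofinal_seq (h i) δ.cof hμℵ hc
      exact ⟨e, fun _ => ⟨h1, h2, h3⟩⟩
    · exact ⟨fun _ => 0, fun hc' => absurd hc' hc⟩
  choose e he1 using he
  have hZe : ∀ a, ∃ ζ, ζ < δ.cof.ord ∧ (a < δ → ∀ i, i < κ.ord → (h i).cof = δ.cof →
      f a i < h i → f a i < e i ζ) := by
    intro a
    by_cases ha : a < δ
    · have hzi : ∀ i, ∃ ζ, ζ < δ.cof.ord ∧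
          (i < κ.ord → (h i).cof = δ.cof → f a i < h i → f a i < e i ζ) := by
        intro i
        by_cases hc : (h i).cof = δ.cof ∧ f a i < h i
        · obtain ⟨ξ, hξ, hlt⟩ := (he1 i hc.1).2.2 (f a i) hc.2
          exact ⟨ξ, hξ, fun _ _ _ => hlt⟩
        · exact ⟨0, hμlim.pos, fun h1 h2 h3 => absurd ⟨h2, h3⟩ hc⟩
      choose z hz1 hz2 using hzi
      have hbs : Ordinal.bsup κ.ord (fun i _ => z i) < δ.cof.ord := by
        refine Ordinal.bsup_lt_ord ?_ (fun i _ => hz1 i)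
        rw [Cardinal.card_ord, hμord]; exact hκμ
      refine ⟨Ordinal.bsup κ.ord (fun i _ => z i), hbs, fun _ i hi hc hlt => ?_⟩
      exact (hz2 i hi hc hlt).trans_le
        ((he1 i hc).2.1 (z i) (hz1 i) _ hbs (Ordinal.le_bsup _ i hi))
    · exact ⟨0, hμlim.pos, fun ha' => absurd ha' ha⟩
  choose Z hZ1 hZ2 using hZe
  set α : Ordinal → Ordinal := seqB δ dfun κ.ord I f e Z with hα
  have hζs : ∀ ξ, ξ < δ.cof.ord →
      Ordinal.bsup ξ (fun η _ => Order.succ (Z (α η))) < δ.cof.ord := by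
    intro ξ hξ
    refine Ordinal.bsup_lt_ord ?_ (fun η hη => hμlim.succ_lt (hZ1 (α η)))
    rw [hμord]; exact Cardinal.lt_ord.1 hξ
  have hEh : ∀ ξ, ξ < δ.cof.ord →
      ltMod κ.ord I (fun i => e i (Ordinal.bsup ξ (fun η _ => Order.succ (Z (α η))))) h := by
    intro ξ hξ
    show {i | i < κ.ord ∧ h i ≤ e i (Ordinal.bsup ξ (fun η _ => Order.succ (Z (α η))))} ∈ I
    refine hI.mono _ hne _ ?_
    intro i hi
    refine ⟨hi.1, fun hc => ?_⟩
    exact absurd hi.2 (not_le.2 ((he1 i hc).1 _ (hζs ξ hξ)))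
  have key : ∀ ξ, ξ < δ.cof.ord → (α ξ < δ ∧ dfun ξ < α ξ ∧ (∀ η < ξ, α η < α ξ) ∧
      ltMod κ.ord I (fun i => e i (Ordinal.bsup ξ (fun η _ => Order.succ (Z (α η)))))
        (f (α ξ))) := by
    intro ξ
    induction ξ using Ordinal.induction with
    | h ξ IH =>
      intro hξ
      have hbsup : Ordinal.bsup ξ (fun η _ => α η) < δ :=
        Ordinal.bsup_lt_ord (Cardinal.lt_ord.1 hξ) (fun η hη => (IH η hη (hη.trans hξ)).1)
      obtain ⟨β, hβδ, hβ⟩ := hexact _ (hEh ξ hξ)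
      set a := Order.succ (max β (max (dfun ξ) (Ordinal.bsup ξ (fun η _ => α η)))) with hadef
      have haδ : a < δ := hδ.succ_lt (max_lt hβδ (max_lt (hdlt ξ hξ) hbsup))
      have hβa : β < a := (le_max_left _ _).trans_lt (Order.lt_succ _)
      have hd_a : dfun ξ < a :=
        ((le_max_left _ _).trans (le_max_right β _)).trans_lt (Order.lt_succ _)
      have hb_a : Ordinal.bsup ξ (fun η _ => α η) < a :=
        ((le_max_right _ _).trans (le_max_right β _)).trans_lt (Order.lt_succ _)
      have hEa : ltMod κ.ord I
          (fun i => e i (Ordinal.bsup ξ (fun η _ => Order.succ (Z (α η))))) (f a) := by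
        show {i | i < κ.ord ∧
          f a i ≤ e i (Ordinal.bsup ξ (fun η _ => Order.succ (Z (α η))))} ∈ I
        have h1 : {i | i < κ.ord ∧ f a i ≤ f β i} ∈ I := hinc β hβδ a haδ hβa
        refine hI.mono _ (hI.union_mem _ h1 _ hβ) _ ?_
        intro i hi
        rcases le_or_gt (f a i) (f β i) with hc | hc
        · exact Or.inl ⟨hi.1, hc⟩
        · exact Or.inr ⟨hi.1, (hc.trans_le hi.2).le⟩
      have spec := seqB_spec δ dfun κ.ord I f e Z ξ ⟨a, haδ, hd_a, hb_a, hEa⟩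
      exact ⟨spec.1, spec.2.1, fun η hη =>
        (Ordinal.le_bsup (fun η _ => α η) η hη).trans_lt spec.2.2.1, spec.2.2.2⟩
  set bad : Ordinal → Set Ordinal := fun ξ =>
    {i | i < κ.ord ∧ (h i).cof ≠ δ.cof} ∪ {i | i < κ.ord ∧ h i ≤ f (α ξ) i} ∪
    {i | i < κ.ord ∧ f (α ξ) i ≤ e i (Ordinal.bsup ξ (fun η _ => Order.succ (Z (α η))))}
    with hbad
  have hbadI : ∀ ξ, ξ < δ.cof.ord → bad ξ ∈ I := by
    intro ξ hξ
    rw [hbad]; dsimp only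
    exact hI.union_mem _ (hI.union_mem _ hne _ (hub (α ξ) (key ξ hξ).1)) _ (key ξ hξ).2.2.2
  have hchain : ∀ i, i < κ.ord → ∀ η ξ, η < ξ → ξ < δ.cof.ord → i ∉ bad η → i ∉ bad ξ →
      f (α η) i < f (α ξ) i := by
    intro i hi η ξ hηξ hξ hbη hbξ
    have hη : η < δ.cof.ord := hηξ.trans hξ
    rw [hbad] at hbη hbξ; dsimp only at hbη hbξ
    have hcof_i : (h i).cof = δ.cof := by
      by_contra hc; exact hbη (Or.inl (Or.inl ⟨hi, hc⟩))
    have hfh : f (α η) i < h i := by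
      by_contra hc; push_neg at hc; exact hbη (Or.inl (Or.inr ⟨hi, hc⟩))
    have hW : ¬ f (α ξ) i ≤ e i (Ordinal.bsup ξ (fun η _ => Order.succ (Z (α η)))) := by
      intro hc; exact hbξ (Or.inr ⟨hi, hc⟩)
    have h1 : f (α η) i < e i (Z (α η)) := hZ2 (α η) (key η hη).1 i hi hcof_i hfh
    have h2 : e i (Z (α η)) ≤ e i (Ordinal.bsup ξ (fun η _ => Order.succ (Z (α η)))) := by
      refine (he1 i hcof_i).2.1 _ (hZ1 (α η)) _ (hζs ξ hξ) ?_
      exact (Order.le_succ _).trans (Ordinal.le_bsup _ η hηξ)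
    exact (h1.trans_le h2).trans (not_le.1 hW)
  set sfun : Ordinal → Set Ordinal := fun a =>
    if H : ∃ ξ, ξ < δ.cof.ord ∧ α ξ = a then bad H.choose else ∅ with hsfun
  refine ⟨{a | ∃ ξ, ξ < δ.cof.ord ∧ α ξ = a}, ?_, ?_, sfun, ?_, ?_⟩
  · rintro a ⟨ξ, hξ, rfl⟩; exact (key ξ hξ).1
  · intro β hβ
    obtain ⟨ξ, hξ, hle⟩ := hdcof β hβ
    exact ⟨α ξ, ⟨ξ, hξ, rfl⟩, hle.trans_lt (key ξ hξ).2.1⟩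
  · intro a haA
    have Ha : ∃ ξ, ξ < δ.cof.ord ∧ α ξ = a := haA
    rw [hsfun]; dsimp only; rw [dif_pos Ha]
    exact hbadI Ha.choose Ha.choose_spec.1
  · intro i hi a haA b hbA hab hsa hsb
    have Ha : ∃ ξ, ξ < δ.cof.ord ∧ α ξ = a := haA
    have Hb : ∃ ξ, ξ < δ.cof.ord ∧ α ξ = b := hbA
    rw [hsfun] at hsa hsb; dsimp only at hsa hsb
    rw [dif_pos Ha] at hsa
    rw [dif_pos Hb] at hsb
    obtain ⟨hξ1, hα1⟩ := Ha.choose_spec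
    obtain ⟨hξ2, hα2⟩ := Hb.choose_spec
    have hlt : Ha.choose < Hb.choose := by
      rcases lt_trichotomy Ha.choose Hb.choose with hc | hc | hc
      · exact hc
      · exfalso; rw [hc, hα2] at hα1; rw [hα1] at hab; exact lt_irrefl _ hab
      · exfalso
        have hba := (key Ha.choose hξ1).2.2.1 Hb.choose hc
        rw [hα1, hα2] at hba
        exact lt_asymm hab hba
    have hres := hchain i hi Ha.choose Hb.choose hlt hξ2 hsa hsb
    rw [hα1, hα2] at hres
    exact hres

end SH16B


/-- Claim 1.6B: for a `<_I`-increasing sequence of length `δ` with `cf(δ) > κ⁺`,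
goodness is equivalent to the existence of a `<_I`-exact upper bound `f` with
`cf(f(i)) > κ` for all `i < κ` and `{i < κ : cf(f(i)) ≠ cf(δ)} ∈ I`. -/
theorem statement4 (κ : Cardinal.{0}) (hκ : ℵ₀ ≤ κ)
    (I : Set (Set Ordinal.{0})) (hI : IsIdealOn κ.ord I)
    (δ : Ordinal.{0}) (hδ : Order.IsSuccLimit δ) (hcof : Order.succ κ < δ.cof)
    (f : Ordinal.{0} → Ordinal.{0} → Ordinal.{0})
    (hinc : ∀ α < δ, ∀ β < δ, α < β → ltMod κ.ord I (f α) (f β)) :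
    IsGoodPt κ.ord I f δ ↔
      ∃ h : Ordinal.{0} → Ordinal.{0}, IsEub κ.ord I δ f h ∧
        (∀ i < κ.ord, κ < (h i).cof) ∧
        {i | i < κ.ord ∧ (h i).cof ≠ δ.cof} ∈ I := by
  constructor
  · exact fun hg => SH16B.good_to_eub κ hκ I hI δ hδ hcof f hinc hg
  · rintro ⟨h, heub, hcofgt, hne⟩
    exact SH16B.eub_to_good κ hκ I hI δ hδ hcof f hinc h heub hne
end

section
/- In the scale context, for every limit ordinal δ < μ with κ < cf(δ) < λ: δ ∈ S^gd ∪ S^bd if and only if ⟨f_α : α < δ⟩ has a <_J-exact upper bound f with {i < κ : cf(f(i)) ≤ κ} ∈ J. -/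
open Cardinal Set

/-- Any `κ`-indexed family of ordinals below `δ` is bounded below `δ` when `κ.card < cof δ`. -/
private lemma bdd_below_cof {κ δ : Ordinal.{0}} (hκδ : κ.card < δ.cof)
    (b : Ordinal → Ordinal.{0}) (hb : ∀ i, b i < δ) :
    ∃ σ < δ, ∀ i < κ, b i ≤ σ := by
  set F : κ.ToType → Ordinal.{0} := fun x => b (Ordinal.ToType.mk.symm x).1 with hF
  have hsup : iSup F < δ :=
    Ordinal.iSup_lt_ord (by rwa [Cardinal.mk_toType]) (fun x => hb _)
  refine ⟨iSup F, hsup, fun i hi => ?_⟩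
  have hbi : b i = F (Ordinal.ToType.mk ⟨i, hi⟩) := by
    rw [hF]; simp
  rw [hbi]
  exact Ordinal.le_iSup F _

/-- Fact 1.8(2): `δ ∈ Sgd ∪ Sbd` iff `⟨f_α : α < δ⟩` has a `<_J`-exact upper bound `h`
with `{i < κ : cf(h(i)) ≤ κ} ∈ J`. -/
theorem statement6
    (κ lam μ : Cardinal.{0}) (hκ : κ.IsRegular) (hκlam : κ < lam)
    (hcfl : lam.ord.cof = κ) (hμ : μ = Order.succ lam)
    (J : Set (Set Ordinal.{0})) (hJ : IsIdealOn κ.ord J) (hJbd : boundedIdeal κ.ord ⊆ J)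
    (lamSeq : Ordinal.{0} → Cardinal.{0})
    (hreg : ∀ i < κ.ord, (lamSeq i).IsRegular)
    (hgtκ : ∀ i < κ.ord, Order.succ κ < lamSeq i)
    (hmono : ∀ i < κ.ord, ∀ j < κ.ord, i < j → lamSeq i < lamSeq j)
    (hbelow : ∀ i < κ.ord, lamSeq i < lam)
    (hsupl : ∀ c < lam, ∃ i < κ.ord, c < lamSeq i)
    (f : Ordinal.{0} → Ordinal.{0} → Ordinal.{0})
    (hf : ∀ α < μ.ord, ∀ i < κ.ord, f α i < (lamSeq i).ord)
    (hinc : ∀ α < μ.ord, ∀ β < μ.ord, α < β → ltMod κ.ord J (f α) (f β))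
    (hcofinal : ∀ g : Ordinal.{0} → Ordinal.{0}, (∀ i < κ.ord, g i < (lamSeq i).ord) →
      ∃ α < μ.ord, ltMod κ.ord J g (f α))
    (δ : Ordinal.{0}) (hδμ : δ < μ.ord) (hδ : Order.IsSuccLimit δ)
    (h1 : κ < δ.cof) (h2 : δ.cof < lam) :
    δ ∈ Sgd κ lam J f ∪ Sbd κ lam J f ↔
      ∃ h : Ordinal.{0} → Ordinal.{0}, IsEub κ.ord J δ f h ∧
        {i | i < κ.ord ∧ (h i).cof ≤ κ} ∈ J := by
  classical
  have hδsucc : δ < (Order.succ lam).ord := by rw [← hμ]; exact hδμ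
  constructor
  · rintro (hδgd | hδbd)
    · -- good point: build the exact upper bound
      obtain ⟨-, -, -, -, A, hA, hAub, s, hsJ, hmot⟩ := hδgd
      have hAμ : ∀ α ∈ A, α < μ.ord := fun α hα => (hA hα).trans hδμ
      -- activity
      set act : Ordinal → Prop := fun i => ∀ β < δ, ∃ α ∈ A, β < α ∧ i ∉ s α with hactdef
      set S : Ordinal → Set Ordinal := fun i => (fun α => f α i) '' {α | α ∈ A ∧ i ∉ s α}
        with hSdef
      set H : Ordinal → Ordinal := fun i => if act i then sSup (S i) else 0 with hHdef
      have hSne : ∀ i, act i → (S i).Nonempty := by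
        intro i hi
        obtain ⟨α, hαA, -, hαs⟩ := hi 0 hδ.pos
        exact ⟨f α i, α, ⟨hαA, hαs⟩, rfl⟩
      have hSbdd : ∀ i < κ.ord, BddAbove (S i) := by
        intro i hiκ
        refine ⟨(lamSeq i).ord, fun y hy => ?_⟩
        obtain ⟨α, hα, rfl⟩ := hy
        exact (hf α (hAμ α hα.1) i hiκ).le
      -- members of the image are ≤ H
      have hHact : ∀ i, act i → H i = sSup (S i) := by
        intro i hi
        rw [hHdef]
        exact if_pos hi
      have hmemle : ∀ i < κ.ord, act i → ∀ α ∈ A, i ∉ s α → f α i ≤ H i := by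
        intro i hiκ hiact α hαA hαs
        rw [hHact i hiact]
        exact le_csSup (hSbdd i hiκ) ⟨α, ⟨hαA, hαs⟩, rfl⟩
      -- strict bound
      have hlt : ∀ i < κ.ord, act i → ∀ α ∈ A, i ∉ s α → f α i < H i := by
        intro i hiκ hiact α hαA hαs
        obtain ⟨β, hβA, hαβ, hβs⟩ := hiact α (hA hαA)
        exact (hmot i hiκ α hαA β hβA hαβ hαs hβs).trans_le (hmemle i hiκ hiact β hβA hβs)
      -- elements below H are dominated
      have hle : ∀ i < κ.ord, act i → ∀ γ < H i, ∃ α ∈ A, i ∉ s α ∧ γ < f α i := by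
        intro i hiκ hiact γ hγ
        rw [hHact i hiact] at hγ
        obtain ⟨y, hy, hγy⟩ := exists_lt_of_lt_csSup (hSne i hiact) hγ
        obtain ⟨α, hα, rfl⟩ := hy
        exact ⟨α, hα.1, hα.2, hγy⟩
      -- the inactive set is in J
      set t : Set Ordinal := {i | i < κ.ord ∧ ¬ act i} with htdef
      have hcard : κ.ord.card < δ.cof := by rwa [Cardinal.card_ord]
      have htJ : t ∈ J := by
        have hch : ∀ i, ∃ β, β < δ ∧ (i ∈ t → ∀ α ∈ A, β < α → i ∈ s α) := by
          intro i
          by_cases hi : i ∈ t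
          · have hni : ¬ (∀ β < δ, ∃ α ∈ A, β < α ∧ i ∉ s α) := hi.2
            push_neg at hni
            obtain ⟨β, hβδ, hβ⟩ := hni
            exact ⟨β, hβδ, fun _ α hαA hβα => hβ α hαA hβα⟩
          · exact ⟨0, hδ.pos, fun h' => absurd h' hi⟩
        choose b hbδ hb using hch
        obtain ⟨σ, hσδ, hσ⟩ := bdd_below_cof hcard b hbδ
        obtain ⟨α₀, hα₀A, hα₀⟩ := hAub σ hσδ
        refine hJ.mono (s α₀) (hsJ α₀ hα₀A) t (fun i hi => ?_)
        exact hb i hi α₀ hα₀A ((hσ i hi.1).trans_lt hα₀)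
      -- H is an upper bound mod J for members of A
      have hubA : ∀ α ∈ A, ltMod κ.ord J (f α) H := by
        intro α hαA
        refine hJ.mono (t ∪ s α) (hJ.union_mem t htJ (s α) (hsJ α hαA)) _ (fun i hi => ?_)
        obtain ⟨hiκ, hiH⟩ := hi
        by_cases hiact : act i
        · by_cases his : i ∈ s α
          · exact Or.inr his
          · exact absurd hiH (not_le.mpr (hlt i hiκ hiact α hαA his))
        · exact Or.inl ⟨hiκ, hiact⟩
      have hub : ∀ α < δ, ltMod κ.ord J (f α) H := by
        intro α hαδ
        obtain ⟨β, hβA, hαβ⟩ := hAub α hαδ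
        have hαβJ := hinc α (hαδ.trans hδμ) β (hAμ β hβA) hαβ
        have hβH := hubA β hβA
        refine hJ.mono _ (hJ.union_mem _ hαβJ _ hβH) _ (fun i hi => ?_)
        obtain ⟨hiκ, hiH⟩ := hi
        rcases le_or_gt (f β i) (f α i) with hc | hc
        · exact Or.inl ⟨hiκ, hc⟩
        · exact Or.inr ⟨hiκ, hiH.trans hc.le⟩
      refine ⟨H, ⟨hub, ?_⟩, ?_⟩
      · -- exactness
        intro g hg
        have hch : ∀ i, ∃ α, α < δ ∧
            ((i < κ.ord ∧ act i ∧ g i < H i) → α ∈ A ∧ i ∉ s α ∧ g i < f α i) := by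
          intro i
          by_cases hi : i < κ.ord ∧ act i ∧ g i < H i
          · obtain ⟨α, hαA, hαs, hαg⟩ := hle i hi.1 hi.2.1 (g i) hi.2.2
            exact ⟨α, hA hαA, fun _ => ⟨hαA, hαs, hαg⟩⟩
          · exact ⟨0, hδ.pos, fun h' => absurd h' hi⟩
        choose b hbδ hb using hch
        obtain ⟨σ, hσδ, hσ⟩ := bdd_below_cof hcard b hbδ
        obtain ⟨η, hηA, hησ⟩ := hAub σ hσδ
        refine ⟨η, hA hηA, ?_⟩
        have hJ3 : t ∪ ({i | i < κ.ord ∧ H i ≤ g i} ∪ s η) ∈ J :=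
          hJ.union_mem t htJ _ (hJ.union_mem _ hg _ (hsJ η hηA))
        refine hJ.mono _ hJ3 _ (fun i hi => ?_)
        obtain ⟨hiκ, hif⟩ := hi
        by_cases hiact : act i
        · by_cases hiH : H i ≤ g i
          · exact Or.inr (Or.inl ⟨hiκ, hiH⟩)
          · by_cases his : i ∈ s η
            · exact Or.inr (Or.inr his)
            · exfalso
              obtain ⟨hbA, hbs, hbg⟩ := hb i ⟨hiκ, hiact, not_le.mp hiH⟩
              have hblt : b i < η := (hσ i hiκ).trans_lt hησ
              have := hmot i hiκ (b i) hbA η hηA hblt hbs his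
              exact absurd hif (not_le.mpr (hbg.trans this))
        · exact Or.inl ⟨hiκ, hiact⟩
      · -- cofinality condition
        refine hJ.mono t htJ _ (fun i hi => ?_)
        obtain ⟨hiκ, hicof⟩ := hi
        refine ⟨hiκ, fun hiact => ?_⟩
        -- show κ < cof (H i), contradicting hicof
        apply absurd hicof
        rw [not_le]
        by_contra hcof
        rw [not_lt] at hcof
        obtain ⟨ι, F, hlsub, hmk⟩ := Ordinal.exists_lsub_cof (H i)
        have hch : ∀ x : ι, ∃ α, α ∈ A ∧ i ∉ s α ∧ F x < f α i := by
          intro x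
          have : F x < H i := hlsub ▸ Ordinal.lt_lsub F x
          exact hle i hiκ hiact (F x) this
        choose a haA has haF using hch
        have hιδ : #ι < δ.cof := by
          rw [hmk]
          exact lt_of_le_of_lt hcof h1
        have hsupa : iSup a < δ := Ordinal.iSup_lt_ord hιδ (fun x => hA (haA x))
        obtain ⟨α, hαA, hσα, hαs⟩ := hiact (iSup a) hsupa
        have hfα : f α i < H i := hlt i hiκ hiact α hαA hαs
        rw [← hlsub, Ordinal.lt_lsub_iff] at hfα
        obtain ⟨x, hx⟩ := hfα
        have hax : a x < α := (Ordinal.le_iSup a x).trans_lt hσα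
        have := hmot i hiκ (a x) (haA x) α hαA hax (has x) hαs
        exact absurd (hx.trans_lt ((haF x).trans this)) (lt_irrefl _)
    · exact hδbd.2.2.2.2.1
  · rintro ⟨h, hh, hhJ⟩
    by_cases hg : IsGoodPt κ.ord J f δ
    · exact Or.inl ⟨hδsucc, hδ, h1, h2, hg⟩
    · exact Or.inr ⟨hδsucc, hδ, h1, h2, ⟨h, hh, hhJ⟩, hg⟩
end

section
/- In the scale context, suppose in addition that J is θ-complete, χ is a cardinal with κ ≤ χ, ζ ≤ θ is a limit ordinal, and λ = χ^{+ζ}. Let δ be a limit ordinal with κ < cf(δ) < λ such that ⟨f_α : α < δ⟩ has a <_J-exact upper bound f* with {i < κ : cf(f*(i)) ≤ κ} ∈ J, and put λ^δ_i = cf(f*(i)). Then: (i) if δ ∈ S^gd then {i < κ : λ^δ_i ≠ cf(δ)} ∈ J; (ii) if δ ∈ S^bd and δ is not weakly f̄-good then {i < κ : λ^δ_i ≥ χ} ∈ J. -/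
open Cardinal Set

noncomputable section AuxLemmas

-- basic facts about cofinal sequences
theorem exists_cofinalSeq (a : Ordinal.{0}) (ha : ℵ₀ ≤ a.cof) :
    ∃ e : Ordinal → Ordinal, (∀ ξ < a.cof.ord, e ξ < a) ∧
      (∀ ξ < a.cof.ord, ∀ ξ' < a.cof.ord, ξ < ξ' → e ξ < e ξ') ∧
      (∀ c < a, ∃ ξ < a.cof.ord, c < e ξ) := by
  obtain ⟨F, hF⟩ := Ordinal.exists_fundamental_sequence a
  have hlim : Order.IsSuccLimit a.cof.ord := Cardinal.isSuccLimit_ord (by simpa using ha)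
  refine ⟨fun ξ => if h : ξ < a.cof.ord then F ξ h else 0, ?_, ?_, ?_⟩
  · intro ξ hξ; simp only [dif_pos hξ]; exact hF.lt hξ
  · intro ξ hξ ξ' hξ' h; simp only [dif_pos hξ, dif_pos hξ']
    exact hF.strict_mono hξ hξ' h
  · intro c hc
    have : c < Ordinal.blsub a.cof.ord F := by rw [hF.blsub_eq]; exact hc
    obtain ⟨ξ, hξ, hcξ⟩ := Ordinal.lt_blsub_iff.mp this
    have hsucc : ξ + 1 < a.cof.ord := by
      rw [Ordinal.add_one_eq_succ]; exact hlim.succ_lt hξ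
    have hlt : ξ < ξ + 1 := by
      rw [Ordinal.add_one_eq_succ]; exact Order.lt_succ ξ
    refine ⟨ξ + 1, hsucc, ?_⟩
    show c < if h : ξ + 1 < a.cof.ord then F (ξ+1) h else 0
    rw [dif_pos hsucc]
    exact hcξ.trans_lt (hF.strict_mono hξ hsucc hlt)


theorem cof_bsup_of_unbounded {ν : Cardinal.{0}} (hν : ν.IsRegular)
    (E : Set Ordinal) (v : Ordinal → Ordinal) (g : ∀ ξ < ν.ord, Ordinal.{0})
    (hgE : ∀ ξ (h : ξ < ν.ord), ξ ∈ E → g ξ h = v ξ)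
    (hgNE : ∀ ξ (h : ξ < ν.ord), ξ ∉ E → g ξ h = 0)
    (hE : ∀ b < ν.ord, ∃ ξ, b ≤ ξ ∧ ξ < ν.ord ∧ ξ ∈ E)
    (hv : ∀ ξ ∈ E, ξ < ν.ord → ∀ ξ' ∈ E, ξ' ∈ Iio ν.ord → ξ < ξ' → v ξ < v ξ') :
    (Ordinal.bsup.{0,0} ν.ord g).cof = ν := by
  have hνlim : Order.IsSuccLimit ν.ord := Cardinal.isSuccLimit_ord hν.aleph0_le
  set a := Ordinal.bsup.{0,0} ν.ord g with hadef
  have ex2 : ∀ ξ < ν.ord, ∃ ξ', ξ' ∈ E ∧ ξ < ξ' ∧ ξ' < ν.ord := by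
    intro ξ hξ
    obtain ⟨ξ', h1, h2, h3⟩ := hE (ξ + 1) (by rw [Ordinal.add_one_eq_succ]; exact hνlim.succ_lt hξ)
    exact ⟨ξ', h3, lt_of_lt_of_le (lt_add_one ξ) h1, h2⟩
  have hvlea : ∀ ξ, ξ ∈ E → ξ < ν.ord → v ξ ≤ a := by
    intro ξ hξE hξ
    have := Ordinal.le_bsup g ξ hξ
    rwa [hgE ξ hξ hξE] at this
  have hga : ∀ ξ (hξ : ξ < ν.ord), g ξ hξ < a := by
    intro ξ hξ
    obtain ⟨ξ', hE', hlt', hν'⟩ := ex2 ξ hξ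
    by_cases hξE : ξ ∈ E
    · calc g ξ hξ = v ξ := hgE ξ hξ hξE
        _ < v ξ' := hv ξ hξE hξ ξ' hE' hν' hlt'
        _ ≤ a := hvlea ξ' hE' hν'
    · rw [hgNE ξ hξ hξE]
      obtain ⟨ξ0, _, hν0, hE0⟩ := hE 0 hνlim.pos
      obtain ⟨ξ1, hE1, hlt1, hν1⟩ := ex2 ξ0 hν0
      exact lt_of_le_of_lt zero_le
        (lt_of_lt_of_le (hv ξ0 hE0 hν0 ξ1 hE1 hν1 hlt1) (hvlea ξ1 hE1 hν1))
  have hle : a.cof ≤ ν := by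
    have := Ordinal.cof_bsup_le hga
    rwa [Cardinal.card_ord] at this
  have hge : ν ≤ a.cof := by
    obtain ⟨G, hG⟩ := Ordinal.exists_fundamental_sequence a
    set m : ∀ j < a.cof.ord, Ordinal.{0} :=
      fun j hj => sInf {ξ | ξ ∈ E ∧ ξ < ν.ord ∧ G j hj < v ξ} with hm
    have hmmem : ∀ j (hj : j < a.cof.ord),
        m j hj ∈ {ξ | ξ ∈ E ∧ ξ < ν.ord ∧ G j hj < v ξ} := by
      intro j hj
      apply csInf_mem
      have : G j hj < a := hG.lt hj
      rw [hadef, Ordinal.lt_bsup] at this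
      obtain ⟨ξ, hξ, hlt⟩ := this
      by_cases hξE : ξ ∈ E
      · rw [hgE ξ hξ hξE] at hlt
        exact ⟨ξ, hξE, hξ, hlt⟩
      · rw [hgNE ξ hξ hξE] at hlt
        exact absurd hlt (not_lt.mpr zero_le)
    have hblsub : Ordinal.blsub.{0,0} a.cof.ord m = ν.ord := by
      apply le_antisymm
      · exact Ordinal.blsub_le fun j hj => (hmmem j hj).2.1
      · by_contra hcon
        push_neg at hcon
        obtain ⟨ξ, hbξ, hξν, hξE⟩ := hE _ hcon
        obtain ⟨ξ', hE', hlt', hν'⟩ := ex2 ξ hξν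
        have h1 : v ξ < a := lt_of_lt_of_le (hv ξ hξE hξν ξ' hE' hν' hlt') (hvlea ξ' hE' hν')
        rw [← hG.blsub_eq, Ordinal.lt_blsub_iff] at h1
        obtain ⟨j, hj, hvG⟩ := h1
        obtain ⟨hmE, hmν, hmG⟩ := hmmem j hj
        have hξm : ξ < m j hj := by
          rcases lt_trichotomy ξ (m j hj) with h | h | h
          · exact h
          · exact absurd (hvG.trans_lt hmG) (by rw [← h]; exact lt_irrefl _)
          · exact absurd ((hv _ hmE hmν _ hξE hξν h).trans (hvG.trans_lt hmG))
              (lt_irrefl _)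
        exact ((hbξ.trans hξm.le).trans_lt (Ordinal.lt_blsub m j hj)).false
    have := Ordinal.cof_blsub_le m
    rw [hblsub, hν.cof_eq] at this
    rwa [Cardinal.card_ord] at this
  exact le_antisymm hle hge


theorem weaklyGood_of_const_cof
    {κ : Cardinal.{0}} {J : Set (Set Ordinal.{0})} (hJ : IsIdealOn κ.ord J)
    {δ : Ordinal.{0}} (hδ : Order.IsSuccLimit δ) (h1 : κ < δ.cof)
    {f : Ordinal.{0} → Ordinal.{0} → Ordinal.{0}} {fstar : Ordinal.{0} → Ordinal.{0}}
    (hfstar : IsEub κ.ord J δ f fstar)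
    (hincδ : ∀ α < δ, ∀ β < δ, α < β → ltMod κ.ord J (f α) (f β))
    {σ : Cardinal.{0}} (hσreg : σ.IsRegular) (hκσ : κ < σ)
    {L : Set Ordinal.{0}} (hLsub : L ⊆ Iio κ.ord) (hLpos : L ∉ J)
    (hLcof : ∀ i ∈ L, (fstar i).cof = σ) :
    IsWeaklyGoodPt κ.ord J f δ := by
  classical
  set κo := κ.ord with hκo
  set ν := δ.cof with hν
  have hνreg : ν.IsRegular := Cardinal.isRegular_cof hδ
  have hσlim : Order.IsSuccLimit σ.ord := Cardinal.isSuccLimit_ord hσreg.aleph0_le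
  have hσcof : σ.ord.cof = σ := hσreg.cof_eq
  -- the zero set
  have hZ : {i | i < κo ∧ fstar i = 0} ∈ J := by
    refine hJ.mono _ (hfstar.1 0 hδ.pos) _ ?_
    rintro i ⟨hiκ, hi0⟩
    exact ⟨hiκ, by rw [hi0]; exact zero_le⟩
  -- cofinal sequences in each fstar i
  have hEex : ∀ i, ∃ e : Ordinal.{0} → Ordinal.{0}, i ∈ L →
      ((∀ ξ < σ.ord, e ξ < fstar i) ∧
       (∀ ξ < σ.ord, ∀ ξ' < σ.ord, ξ < ξ' → e ξ < e ξ') ∧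
       (∀ c < fstar i, ∃ ξ < σ.ord, c < e ξ)) := by
    intro i
    by_cases hi : i ∈ L
    · obtain ⟨e, p1, p2, p3⟩ := exists_cofinalSeq (fstar i)
        (by rw [hLcof i hi]; exact hσreg.aleph0_le)
      rw [hLcof i hi] at p1 p2 p3
      exact ⟨e, fun _ => ⟨p1, p2, p3⟩⟩
    · exact ⟨fun _ => 0, fun h => absurd h hi⟩
  choose E hE using hEex
  set h : Ordinal.{0} → Ordinal.{0} → Ordinal.{0} :=
    fun ξ i => if i ∈ L then E i ξ else 0 with hh
  have hhL : ∀ ξ i, i ∈ L → h ξ i = E i ξ := fun ξ i hi => if_pos hi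
  -- claim1
  have claim1 : ∀ ξ < σ.ord, {i | i < κo ∧ fstar i ≤ h ξ i} ∈ J := by
    intro ξ hξ
    refine hJ.mono _ hZ _ ?_
    rintro i ⟨hiκ, hile⟩
    by_cases hi : i ∈ L
    · rw [hhL ξ i hi] at hile
      exact absurd hile (not_le.mpr ((hE i hi).1 ξ hξ))
    · refine ⟨hiκ, le_antisymm ?_ zero_le⟩
      simpa only [hh, if_neg hi] using hile
  -- getα
  have getα : ∀ ξ < σ.ord, ∀ b < δ, ∃ α, α < δ ∧ b < α ∧
      {i | i < κo ∧ f α i ≤ h ξ i} ∈ J := by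
    intro ξ hξ b hb
    obtain ⟨α₀, hα₀, hltm⟩ := hfstar.2 (h ξ) (claim1 ξ hξ)
    have hb1 : b + 1 < δ := by rw [Ordinal.add_one_eq_succ]; exact hδ.succ_lt hb
    refine ⟨max α₀ (b + 1), max_lt hα₀ hb1, lt_of_lt_of_le (lt_add_one b) (le_max_right _ _), ?_⟩
    rcases eq_or_lt_of_le (le_max_left α₀ (b + 1)) with heq | hlt
    · rw [← heq]; exact hltm
    · refine hJ.mono _ (hJ.union_mem _ hltm _
        (hincδ α₀ hα₀ _ (max_lt hα₀ hb1) hlt)) _ ?_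
      rintro i ⟨hiκ, hile⟩
      by_cases hcase : f α₀ i ≤ h ξ i
      · exact Or.inl ⟨hiκ, hcase⟩
      · exact Or.inr ⟨hiκ, hile.trans (le_of_not_ge hcase)⟩
  -- claim2
  have claim2 : ∀ α < δ, ∃ η < σ.ord, {i | i ∈ L ∧ h η i ≤ f α i} ∈ J := by
    intro α hα
    have hW : {i | i < κo ∧ fstar i ≤ f α i} ∈ J := hfstar.1 α hα
    set ξfun : Ordinal.{0} → Ordinal.{0} :=
      fun i => sInf {ξ | ξ < σ.ord ∧ f α i < E i ξ} with hξfun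
    have hξlt : ∀ i, ξfun i + 1 < σ.ord := by
      intro i
      rcases Set.eq_empty_or_nonempty {ξ | ξ < σ.ord ∧ f α i < E i ξ} with he | hne
      · rw [hξfun]; simp only [he, Ordinal.sInf_empty]
        rw [Ordinal.add_one_eq_succ]
        exact hσlim.succ_lt hσlim.pos
      · have := csInf_mem hne
        rw [Ordinal.add_one_eq_succ]
        exact hσlim.succ_lt this.1
    set η := Ordinal.bsup.{0,0} κo (fun i _ => ξfun i + 1) with hηdef
    have hησ : η < σ.ord := by
      apply Ordinal.bsup_lt_ord _ (fun i hi => hξlt i)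
      rw [hσcof, hκo, Cardinal.card_ord]
      exact hκσ
    refine ⟨η, hησ, hJ.mono _ hW _ ?_⟩
    rintro i ⟨hiL, hile⟩
    have hiκ : i < κo := hLsub hiL
    refine ⟨hiκ, ?_⟩
    by_contra hcon
    push_neg at hcon
    have hne : ({ξ | ξ < σ.ord ∧ f α i < E i ξ}).Nonempty := by
      obtain ⟨ξ, hξ1, hξ2⟩ := (hE i hiL).2.2 (f α i) hcon
      exact ⟨ξ, hξ1, hξ2⟩
    have hmem := csInf_mem hne
    have hlt1 : ξfun i < η := lt_of_lt_of_le (lt_add_one _)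
      (Ordinal.le_bsup (fun i _ => ξfun i + 1) i hiκ)
    have : E i (ξfun i) < E i η := (hE i hiL).2.1 _ hmem.1 _ hησ hlt1
    rw [hhL η i hiL] at hile
    exact absurd ((hmem.2.trans this).trans_le hile) (lt_irrefl _)
  -- ηfun
  set ηfun : Ordinal.{0} → Ordinal.{0} :=
    fun α => sInf {η | η < σ.ord ∧ {i | i ∈ L ∧ h η i ≤ f α i} ∈ J} with hηfun
  have hηmem : ∀ α < δ, ηfun α < σ.ord ∧ {i | i ∈ L ∧ h (ηfun α) i ≤ f α i} ∈ J := by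
    intro α hα
    have hne : ({η | η < σ.ord ∧ {i | i ∈ L ∧ h η i ≤ f α i} ∈ J}).Nonempty := by
      obtain ⟨η, h1, h2⟩ := claim2 α hα
      exact ⟨η, h1, h2⟩
    exact csInf_mem hne
  -- claim3 : ν ≤ σ
  have claim3 : ν ≤ σ := by
    set m : Ordinal.{0} → Ordinal.{0} :=
      fun ξ => sInf {α | α < δ ∧ {i | i < κo ∧ f α i ≤ h ξ i} ∈ J} with hm
    have hmmem : ∀ ξ < σ.ord,
        m ξ < δ ∧ {i | i < κo ∧ f (m ξ) i ≤ h ξ i} ∈ J := by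
      intro ξ hξ
      obtain ⟨α, h1, _, h3⟩ := getα ξ hξ 0 hδ.pos
      have hne : ({α | α < δ ∧ {i | i < κo ∧ f α i ≤ h ξ i} ∈ J}).Nonempty := ⟨α, h1, h3⟩
      exact csInf_mem hne
    have hunb : ∀ b < δ, ∃ ξ < σ.ord, b < m ξ := by
      intro b hb
      obtain ⟨η, hη, hSb⟩ := claim2 b hb
      refine ⟨η, hη, ?_⟩
      obtain ⟨hmδ, hD⟩ := hmmem η hη
      by_contra hcon
      push_neg at hcon
      rcases eq_or_lt_of_le hcon with heq | hlt
      · apply hLpos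
        refine hJ.mono _ (hJ.union_mem _ hD _ hSb) _ ?_
        intro i hiL
        by_cases hc : f (m η) i ≤ h η i
        · exact Or.inl ⟨hLsub hiL, hc⟩
        · refine Or.inr ⟨hiL, ?_⟩
          rw [← heq]
          exact le_of_not_ge hc
      · apply hLpos
        refine hJ.mono _ (hJ.union_mem _ (hJ.union_mem _ hD _ hSb) _
          (hincδ _ hmδ _ hb hlt)) _ ?_
        intro i hiL
        by_cases hc1 : f (m η) i ≤ h η i
        · exact Or.inl (Or.inl ⟨hLsub hiL, hc1⟩)
        by_cases hc2 : h η i ≤ f b i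
        · exact Or.inl (Or.inr ⟨hiL, hc2⟩)
        · exact Or.inr ⟨hLsub hiL, ((le_of_not_ge hc2).trans (le_of_not_ge hc1))⟩
    have hblsub : Ordinal.blsub.{0,0} σ.ord (fun ξ _ => m ξ) = δ := by
      apply le_antisymm
      · exact Ordinal.blsub_le fun ξ hξ => (hmmem ξ hξ).1
      · apply le_of_forall_lt
        intro b hb
        obtain ⟨ξ, hξ, hbm⟩ := hunb b hb
        exact hbm.trans (Ordinal.lt_blsub _ ξ hξ)
    have := Ordinal.cof_blsub_le (fun ξ (_ : ξ < σ.ord) => m ξ)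
    rw [hblsub, Cardinal.card_ord] at this
    exact this
  -- cofinal sequence in δ
  obtain ⟨F, hF1, hF2, hF3⟩ := exists_cofinalSeq δ (Ordinal.aleph0_le_cof.2 hδ)
  -- main recursion
  set body : ∀ ρ : Ordinal.{0}, (∀ ρ' < ρ, Ordinal.{0}) → Ordinal.{0} :=
    fun ρ ih => sInf {α | α < δ ∧ F ρ < α ∧ (∀ ρ' (hρ' : ρ' < ρ), ih ρ' hρ' < α) ∧
      {i | i < κo ∧ f α i ≤
        h (Ordinal.bsup.{0,0} ρ (fun ρ' hρ' => ηfun (ih ρ' hρ') + 1)) i} ∈ J} with hbody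
  set aseq : Ordinal.{0} → Ordinal.{0} := Ordinal.lt_wf.fix body with haseq
  have hunfold : ∀ ρ, aseq ρ = body ρ (fun ρ' _ => aseq ρ') := by
    intro ρ
    rw [haseq]
    exact WellFounded.fix_eq _ _ _
  set ξseq : Ordinal.{0} → Ordinal.{0} :=
    fun ρ => Ordinal.bsup.{0,0} ρ (fun ρ' _ => ηfun (aseq ρ') + 1) with hξseq
  have hinv : ∀ ρ < ν.ord, aseq ρ < δ ∧ F ρ < aseq ρ ∧
      (∀ ρ' < ρ, aseq ρ' < aseq ρ) ∧
      {i | i < κo ∧ f (aseq ρ) i ≤ h (ξseq ρ) i} ∈ J := by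
    intro ρ
    induction ρ using Ordinal.induction with
    | _ ρ IH =>
      intro hρ
      have hξσ : ξseq ρ < σ.ord := by
        apply Ordinal.bsup_lt_ord
        · rw [hσcof]
          exact lt_of_lt_of_le (Cardinal.lt_ord.mp hρ) claim3
        · intro ρ' hρ'
          rw [Ordinal.add_one_eq_succ]
          exact hσlim.succ_lt (hηmem _ ((IH ρ' hρ' (hρ'.trans hρ)).1)).1
      have hprev : Ordinal.bsup.{0,0} ρ (fun ρ' _ => aseq ρ' + 1) < δ := by
        apply Ordinal.bsup_lt_ord
        · exact Cardinal.lt_ord.mp hρ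
        · intro ρ' hρ'
          rw [Ordinal.add_one_eq_succ]
          exact hδ.succ_lt (IH ρ' hρ' (hρ'.trans hρ)).1
      have hb : max (F ρ) (Ordinal.bsup.{0,0} ρ (fun ρ' _ => aseq ρ' + 1)) < δ :=
        max_lt (hF1 ρ hρ) hprev
      obtain ⟨α, hαδ, hbα, hαJ⟩ := getα (ξseq ρ) hξσ _ hb
      have hmem : aseq ρ ∈ {α | α < δ ∧ F ρ < α ∧ (∀ ρ' (hρ' : ρ' < ρ), aseq ρ' < α) ∧
          {i | i < κo ∧ f α i ≤ h (ξseq ρ) i} ∈ J} := by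
        rw [hunfold ρ]
        apply csInf_mem
        refine ⟨α, hαδ, le_max_left _ _ |>.trans_lt hbα, ?_, hαJ⟩
        intro ρ' hρ'
        calc aseq ρ' < aseq ρ' + 1 := lt_add_one _
          _ ≤ _ := Ordinal.le_bsup (fun ρ' _ => aseq ρ' + 1) ρ' hρ'
          _ ≤ max (F ρ) _ := le_max_right _ _
          _ < α := hbα
      exact ⟨hmem.1, hmem.2.1, fun ρ' h' => hmem.2.2.1 ρ' h', hmem.2.2.2⟩
  -- assemble the witness
  set ρof : Ordinal.{0} → Ordinal.{0} :=
    fun α => sInf {ρ | ρ < ν.ord ∧ aseq ρ = α} with hρof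
  refine ⟨L, hLsub, hLpos, aseq '' (Iio ν.ord), ?_, ?_, ?_⟩
  · rintro α ⟨ρ, hρ, rfl⟩
    exact (hinv ρ hρ).1
  · intro b hb
    obtain ⟨ρ, hρ, hbF⟩ := hF3 b hb
    exact ⟨aseq ρ, ⟨ρ, hρ, rfl⟩, hbF.trans (hinv ρ hρ).2.1⟩
  · refine ⟨fun α => {i | i < κo ∧ f α i ≤ h (ξseq (ρof α)) i} ∪
      {i | i ∈ L ∧ h (ηfun α) i ≤ f α i}, ?_, ?_⟩
    · rintro α ⟨ρ, hρ, rfl⟩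
      have hρmem : ρof (aseq ρ) ∈ {ρ' | ρ' < ν.ord ∧ aseq ρ' = aseq ρ} :=
        csInf_mem ⟨ρ, hρ, rfl⟩
      have h1 : {i | i < κo ∧ f (aseq ρ) i ≤ h (ξseq (ρof (aseq ρ))) i} ∈ J := by
        have := (hinv _ hρmem.1).2.2.2
        rwa [hρmem.2] at this
      exact hJ.union_mem _ h1 _ (hηmem _ (hinv ρ hρ).1).2
    · rintro i hiL α ⟨ρ1, hρ1, rfl⟩ β ⟨ρ2, hρ2, rfl⟩ hαβ hs1 hs2
      have hρmem1 : ρof (aseq ρ1) ∈ {ρ' | ρ' < ν.ord ∧ aseq ρ' = aseq ρ1} :=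
        csInf_mem ⟨ρ1, hρ1, rfl⟩
      have hρmem2 : ρof (aseq ρ2) ∈ {ρ' | ρ' < ν.ord ∧ aseq ρ' = aseq ρ2} :=
        csInf_mem ⟨ρ2, hρ2, rfl⟩
      set τ1 := ρof (aseq ρ1)
      set τ2 := ρof (aseq ρ2)
      have hττ : τ1 < τ2 := by
        rcases lt_trichotomy τ1 τ2 with hc | hc | hc
        · exact hc
        · exfalso
          rw [← hρmem1.2, ← hρmem2.2] at hαβ
          rw [hc] at hαβ
          exact lt_irrefl _ hαβ
        · exfalso
          have := (hinv τ1 hρmem1.1).2.2.1 τ2 hc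
          rw [hρmem1.2, hρmem2.2] at this
          exact lt_irrefl _ (this.trans hαβ)
      have hiκ : i < κo := hLsub hiL
      -- from hs1 : not in second part
      have h1' : f (aseq ρ1) i < E i (ηfun (aseq ρ1)) := by
        by_contra hcon
        push_neg at hcon
        exact hs1 (Or.inr ⟨hiL, by rw [hhL _ _ hiL]; exact hcon⟩)
      -- from hs2 : not in first part
      have h2' : E i (ξseq τ2) < f (aseq ρ2) i := by
        by_contra hcon
        push_neg at hcon
        exact hs2 (Or.inl ⟨hiκ, by rw [hhL _ _ hiL]; exact hcon⟩)
      have hξτ2 : ξseq τ2 < σ.ord := by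
        apply Ordinal.bsup_lt_ord
        · rw [hσcof]
          exact lt_of_lt_of_le (Cardinal.lt_ord.mp hρmem2.1) claim3
        · intro ρ' hρ'
          rw [Ordinal.add_one_eq_succ]
          exact hσlim.succ_lt
            (hηmem _ ((hinv ρ' (hρ'.trans hρmem2.1)).1)).1
      have hetalt : ηfun (aseq ρ1) < ξseq τ2 := by
        have := Ordinal.le_bsup (fun ρ' (_ : ρ' < τ2) => ηfun (aseq ρ') + 1) τ1 hττ
        rw [hρmem1.2] at this
        exact lt_of_lt_of_le (lt_add_one _) this
      have hEmono : E i (ηfun (aseq ρ1)) < E i (ξseq τ2) :=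
        (hE i hiL).2.1 _ (hηmem _ (hinv ρ1 hρ1).1).1 _ hξτ2 hetalt
      exact (h1'.trans hEmono).trans h2'

open scoped Classical in
theorem cof_eq_of_good
    {κ : Cardinal.{0}} {J : Set (Set Ordinal.{0})} (hJ : IsIdealOn κ.ord J)
    {δ : Ordinal.{0}} (hδ : Order.IsSuccLimit δ) (h1 : κ < δ.cof)
    {f : Ordinal.{0} → Ordinal.{0} → Ordinal.{0}} {fstar : Ordinal.{0} → Ordinal.{0}}
    (hfstar : IsEub κ.ord J δ f fstar)
    (hincδ : ∀ α < δ, ∀ β < δ, α < β → ltMod κ.ord J (f α) (f β))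
    (hgood : IsGoodPt κ.ord J f δ) :
    {i | i < κ.ord ∧ (fstar i).cof ≠ δ.cof} ∈ J := by
  obtain ⟨A, hAsub, hAunb, s, hsJ, hsinc⟩ := hgood
  set κo := κ.ord with hκo
  set ν := δ.cof with hν
  have hνreg : ν.IsRegular := Cardinal.isRegular_cof hδ
  have hνcof : ν.ord.cof = ν := hνreg.cof_eq
  have hνlim : Order.IsSuccLimit ν.ord := Cardinal.isSuccLimit_ord hνreg.aleph0_le
  have hκν : κo.card < ν := by rw [hκo, Cardinal.card_ord]; exact h1
  have hZ : {i | i < κo ∧ fstar i = 0} ∈ J := by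
    refine hJ.mono _ (hfstar.1 0 hδ.pos) _ ?_
    rintro i ⟨hiκ, hi0⟩
    exact ⟨hiκ, by rw [hi0]; exact zero_le⟩
  obtain ⟨F, hF1, hF2, hF3⟩ := exists_cofinalSeq δ (Ordinal.aleph0_le_cof.2 hδ)
  -- build a strictly increasing cofinal sequence through A
  set body : ∀ ρ : Ordinal.{0}, (∀ ρ' < ρ, Ordinal.{0}) → Ordinal.{0} :=
    fun ρ ih => sInf {α | α ∈ A ∧ F ρ < α ∧ ∀ ρ' (hρ' : ρ' < ρ), ih ρ' hρ' < α} with hbody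
  set aseq : Ordinal.{0} → Ordinal.{0} := Ordinal.lt_wf.fix body with haseq
  have hunfold : ∀ ρ, aseq ρ = body ρ (fun ρ' _ => aseq ρ') := by
    intro ρ
    rw [haseq]
    exact WellFounded.fix_eq _ _ _
  have hinv : ∀ ρ < ν.ord, aseq ρ ∈ A ∧ F ρ < aseq ρ ∧ ∀ ρ' < ρ, aseq ρ' < aseq ρ := by
    intro ρ
    induction ρ using Ordinal.induction with
    | _ ρ IH =>
      intro hρ
      have hprev : Ordinal.bsup.{0,0} ρ (fun ρ' _ => aseq ρ' + 1) < δ := by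
        apply Ordinal.bsup_lt_ord (Cardinal.lt_ord.mp hρ)
        intro ρ' hρ'
        rw [Ordinal.add_one_eq_succ]
        exact hδ.succ_lt (hAsub (IH ρ' hρ' (hρ'.trans hρ)).1)
      have hb : max (F ρ) (Ordinal.bsup.{0,0} ρ (fun ρ' _ => aseq ρ' + 1)) < δ :=
        max_lt (hF1 ρ hρ) hprev
      obtain ⟨α, hαA, hbα⟩ := hAunb _ hb
      have hne : ({α | α ∈ A ∧ F ρ < α ∧ ∀ ρ' (hρ' : ρ' < ρ), aseq ρ' < α}).Nonempty := by
        refine ⟨α, hαA, (le_max_left _ _).trans_lt hbα, ?_⟩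
        intro ρ' hρ'
        calc aseq ρ' < aseq ρ' + 1 := lt_add_one _
          _ ≤ _ := Ordinal.le_bsup (fun ρ' _ => aseq ρ' + 1) ρ' hρ'
          _ ≤ max (F ρ) _ := le_max_right _ _
          _ < α := hbα
      have hmem : aseq ρ ∈ {α | α ∈ A ∧ F ρ < α ∧ ∀ ρ' (hρ' : ρ' < ρ), aseq ρ' < α} := by
        rw [hunfold ρ]
        exact csInf_mem hne
      exact ⟨hmem.1, hmem.2.1, fun ρ' h' => hmem.2.2 ρ' h'⟩
  have haδ : ∀ ρ < ν.ord, aseq ρ < δ := fun ρ hρ => hAsub (hinv ρ hρ).1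
  -- the pointwise limits
  set Ei : Ordinal.{0} → Set Ordinal.{0} := fun i => {ξ | i ∉ s (aseq ξ)} with hEi
  set H : Ordinal.{0} → Ordinal.{0} :=
    fun i => Ordinal.bsup.{0,0} ν.ord (fun ξ _ => if ξ ∈ Ei i then f (aseq ξ) i else 0) with hH
  -- the set where Ei is bounded
  have htbar : {i | i < κo ∧ ∃ b, b < ν.ord ∧
      ∀ ξ, b ≤ ξ → ξ < ν.ord → i ∈ s (aseq ξ)} ∈ J := by
    set bfun : Ordinal.{0} → Ordinal.{0} :=
      fun i => sInf {b | b < ν.ord ∧ ∀ ξ, b ≤ ξ → ξ < ν.ord → i ∈ s (aseq ξ)} with hbfun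
    have hbν : ∀ i, bfun i < ν.ord := by
      intro i
      rcases Set.eq_empty_or_nonempty
        {b | b < ν.ord ∧ ∀ ξ, b ≤ ξ → ξ < ν.ord → i ∈ s (aseq ξ)} with he | hne
      · rw [hbfun]; simp only [he, Ordinal.sInf_empty]; exact hνlim.pos
      · exact (csInf_mem hne).1
    set ξstar := Ordinal.bsup.{0,0} κo (fun i _ => bfun i) with hξstar
    have hξν : ξstar < ν.ord := by
      apply Ordinal.bsup_lt_ord _ (fun i _ => hbν i)
      rw [hνcof]; exact hκν
    refine hJ.mono _ (hsJ _ (hinv ξstar hξν).1) _ ?_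
    rintro i ⟨hiκ, b, hb1, hb2⟩
    have hne : ({b | b < ν.ord ∧ ∀ ξ, b ≤ ξ → ξ < ν.ord → i ∈ s (aseq ξ)}).Nonempty :=
      ⟨b, hb1, hb2⟩
    have hmem := csInf_mem hne
    exact hmem.2 ξstar (Ordinal.le_bsup (fun i _ => bfun i) i hiκ) hξν
  -- fstar ≤ H mod J
  have hW : {i | i < κo ∧ H i < fstar i} ∈ J := by
    set g : Ordinal.{0} → Ordinal.{0} := fun i => if H i < fstar i then H i else 0 with hg
    have hgJ : {i | i < κo ∧ fstar i ≤ g i} ∈ J := by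
      refine hJ.mono _ hZ _ ?_
      rintro i ⟨hiκ, hile⟩
      refine ⟨hiκ, ?_⟩
      by_cases hc : H i < fstar i
      · rw [hg] at hile; simp only [if_pos hc] at hile
        exact absurd (hile.trans_lt hc) (lt_irrefl _)
      · rw [hg] at hile; simp only [if_neg hc] at hile
        exact le_antisymm hile zero_le
    obtain ⟨α, hα, hgfα⟩ := hfstar.2 g hgJ
    obtain ⟨ρ, hρ, hαF⟩ := hF3 α hα
    have hαa : α < aseq ρ := hαF.trans (hinv ρ hρ).2.1
    refine hJ.mono _ (hJ.union_mem _ (hJ.union_mem _ hgfα _ (hsJ _ (hinv ρ hρ).1)) _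
      (hincδ α hα _ (haδ ρ hρ) hαa)) _ ?_
    rintro i ⟨hiκ, hiH⟩
    by_cases hc1 : i ∈ s (aseq ρ)
    · exact Or.inl (Or.inr hc1)
    by_cases hc2 : f (aseq ρ) i ≤ f α i
    · exact Or.inr ⟨hiκ, hc2⟩
    · refine Or.inl (Or.inl ⟨hiκ, ?_⟩)
      have hval : f (aseq ρ) i ≤ H i := by
        have := Ordinal.le_bsup (fun ξ (_ : ξ < ν.ord) =>
          if ξ ∈ Ei i then f (aseq ξ) i else 0) ρ hρ
        rwa [if_pos (by exact hc1 : ρ ∈ Ei i)] at this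
      have : f α i < H i := (lt_of_not_ge hc2).trans_le hval
      rw [hg]; simp only [if_pos hiH]
      exact this.le
  -- H ≤ fstar mod J
  have hU : {i | i < κo ∧ fstar i < H i} ∈ J := by
    set zfun : Ordinal.{0} → Ordinal.{0} :=
      fun i => sInf {ξ | ξ < ν.ord ∧ i ∉ s (aseq ξ) ∧ fstar i < f (aseq ξ) i} with hzfun
    have hzν : ∀ i, zfun i < ν.ord := by
      intro i
      rcases Set.eq_empty_or_nonempty
        {ξ | ξ < ν.ord ∧ i ∉ s (aseq ξ) ∧ fstar i < f (aseq ξ) i} with he | hne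
      · rw [hzfun]; simp only [he, Ordinal.sInf_empty]; exact hνlim.pos
      · exact (csInf_mem hne).1
    set ξ' := Ordinal.bsup.{0,0} κo (fun i _ => zfun i) with hξ'
    have hξν : ξ' < ν.ord := by
      apply Ordinal.bsup_lt_ord _ (fun i _ => hzν i)
      rw [hνcof]; exact hκν
    refine hJ.mono _ (hJ.union_mem _ (hsJ _ (hinv ξ' hξν).1) _
      (hfstar.1 _ (haδ ξ' hξν))) _ ?_
    rintro i ⟨hiκ, hiH⟩
    by_cases hc1 : i ∈ s (aseq ξ')
    · exact Or.inl hc1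
    · refine Or.inr ⟨hiκ, ?_⟩
      rw [hH, Ordinal.lt_bsup] at hiH
      obtain ⟨ξ, hξ, hval⟩ := hiH
      have hξE : ξ ∈ Ei i := by
        by_contra hcon
        simp only [if_neg hcon] at hval
        exact absurd hval (not_lt.mpr zero_le)
      simp only [if_pos hξE] at hval
      have hne : ({ξ | ξ < ν.ord ∧ i ∉ s (aseq ξ) ∧ fstar i < f (aseq ξ) i}).Nonempty :=
        ⟨ξ, hξ, hξE, hval⟩
      have hmem := csInf_mem hne
      have hle : zfun i ≤ ξ' := Ordinal.le_bsup (fun i _ => zfun i) i hiκ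
      rcases eq_or_lt_of_le hle with heq | hlt
      · rw [← heq]; exact hmem.2.2.le
      · have : f (aseq (zfun i)) i < f (aseq ξ') i :=
          hsinc i hiκ _ (hinv _ hmem.1).1 _ (hinv ξ' hξν).1
            ((hinv ξ' hξν).2.2 _ hlt) hmem.2.1 hc1
        exact (hmem.2.2.trans this).le
  -- conclusion
  refine hJ.mono _ (hJ.union_mem _ (hJ.union_mem _ htbar _ hW) _ hU) _ ?_
  rintro i ⟨hiκ, hicof⟩
  by_cases h2 : H i < fstar i
  · exact Or.inl (Or.inr ⟨hiκ, h2⟩)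
  by_cases h3 : fstar i < H i
  · exact Or.inr ⟨hiκ, h3⟩
  have hHf : H i = fstar i := le_antisymm (not_lt.mp h3) (not_lt.mp h2)
  left; left
  refine ⟨hiκ, ?_⟩
  by_contra hcon
  push_neg at hcon
  apply hicof
  rw [← hHf, hH]
  have hunb : ∀ b < ν.ord, ∃ ξ, b ≤ ξ ∧ ξ < ν.ord ∧ ξ ∈ Ei i := by
    intro b hb
    obtain ⟨ξ, q1, q2, q3⟩ := hcon b hb
    exact ⟨ξ, q1, q2, q3⟩
  have hmono : ∀ ξ ∈ Ei i, ξ < ν.ord → ∀ ξ' ∈ Ei i, ξ' ∈ Iio ν.ord → ξ < ξ' →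
      f (aseq ξ) i < f (aseq ξ') i := by
    intro ξ hξE hξ ξ' hξ'E hξ' hlt
    exact hsinc i hiκ _ (hinv ξ hξ).1 _ (hinv ξ' hξ').1 ((hinv ξ' hξ').2.2 ξ hlt) hξE hξ'E
  show (Ordinal.bsup.{0,0} ν.ord fun ξ _ => if ξ ∈ Ei i then f (aseq ξ) i else 0).cof = ν
  exact cof_bsup_of_unbounded hνreg (Ei i) (fun ξ => f (aseq ξ) i)
    (fun ξ _ => if ξ ∈ Ei i then f (aseq ξ) i else 0)
    (fun ξ h hξE => if_pos hξE) (fun ξ h hξE => if_neg hξE) hunb hmono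

theorem succIter_zero (χ : Cardinal.{0}) : succIter χ 0 = χ :=
  Ordinal.limitRecOn_zero _ _ _

theorem succIter_succ (χ : Cardinal.{0}) (γ : Ordinal.{0}) :
    succIter χ (γ + 1) = Order.succ (succIter χ γ) := by
  rw [Ordinal.add_one_eq_succ]
  exact Ordinal.limitRecOn_succ _ _ _ _

theorem succIter_limit (χ : Cardinal.{0}) {ζ : Ordinal.{0}} (hζ : Order.IsSuccLimit ζ) :
    succIter χ ζ = ⨆ γ : Iio ζ, succIter χ γ.1 :=
  Ordinal.limitRecOn_limit _ _ _ _ hζ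

theorem lt_succIter_of_lt_limit {χ : Cardinal.{0}} {ζ : Ordinal.{0}} (hζ : Order.IsSuccLimit ζ)
    {c : Cardinal.{0}} (hc : c < succIter χ ζ) : ∃ γ < ζ, c < succIter χ γ := by
  by_contra hcon
  push_neg at hcon
  rw [succIter_limit χ hζ] at hc
  have hle : (⨆ γ : Iio ζ, succIter χ γ.1) ≤ c := by
    apply ciSup_le'
    rintro ⟨γ, hγ⟩
    exact hcon γ hγ
  exact absurd hc (not_lt.mpr hle)

theorem eq_succIter_of_between {χ : Cardinal.{0}} {γ₀ : Ordinal.{0}} {c : Cardinal.{0}}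
    (h1 : χ ≤ c) (h2 : c ≤ succIter χ γ₀) : ∃ γ' ≤ γ₀, c = succIter χ γ' := by
  set S : Set Ordinal.{0} := {γ | c < succIter χ γ} with hS
  have hgS : γ₀ + 1 ∈ S := by
    rw [hS, mem_setOf_eq, succIter_succ]
    exact h2.trans_lt (Order.lt_succ _)
  have hne : S.Nonempty := ⟨γ₀ + 1, hgS⟩
  have hmem : sInf S ∈ S := csInf_mem hne
  have hmin : ∀ γ, γ < sInf S → ¬ c < succIter χ γ := by
    intro γ hγ hc2
    have hγS : γ ∈ S := hc2
    exact absurd (csInf_le' hγS) (not_le.mpr hγ)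
  have hne0 : sInf S ≠ 0 := by
    intro h0
    have := hmem
    rw [h0, hS, mem_setOf_eq, succIter_zero] at this
    exact absurd this (not_lt.mpr h1)
  have hnlim : ¬ Order.IsSuccLimit (sInf S) := by
    intro hlim
    obtain ⟨γ, hγ, hcγ⟩ := lt_succIter_of_lt_limit hlim hmem
    exact hmin γ hγ hcγ
  obtain ⟨γ', hγ'⟩ : ∃ γ', sInf S = γ' + 1 := by
    rcases Ordinal.zero_or_succ_or_isSuccLimit (sInf S) with h | ⟨γ', h⟩ | h
    · exact absurd h hne0
    · exact ⟨γ', by rw [← h, Ordinal.add_one_eq_succ]⟩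
    · exact absurd h hnlim
  have hlt : c < succIter χ (γ' + 1) := by rw [← hγ']; exact hmem
  rw [succIter_succ, Order.lt_succ_iff] at hlt
  have hge : ¬ c < succIter χ γ' := hmin γ' (by rw [hγ']; exact lt_add_one _)
  refine ⟨γ', ?_, le_antisymm hlt (not_lt.mp hge)⟩
  have : γ' + 1 ≤ γ₀ + 1 := by rw [← hγ']; exact csInf_le' hgS
  exact Order.le_of_lt_succ (by
    rw [← Ordinal.add_one_eq_succ]
    exact lt_of_lt_of_le (lt_add_one _) this)

end AuxLemmas

/-- Claim 1.9(2)(i)(ii): assume `J` is `θ`-complete, `κ ≤ χ`, `ζ ≤ θ` a limit ordinal,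
`λ = χ^{+ζ}`, and `⟨f_α : α < δ⟩` has a `<_J`-eub `f*` with `{i : cf(f*(i)) ≤ κ} ∈ J`.
Then (i) if `δ` is good then `cf(f*(i)) = cf(δ)` mod `J`; (ii) if `δ` is bad and not
weakly good then `cf(f*(i)) < χ` mod `J`. -/
theorem statement8
    (κ lam μ : Cardinal.{0}) (hκ : κ.IsRegular) (hκlam : κ < lam)
    (hcfl : lam.ord.cof = κ) (hμ : μ = Order.succ lam)
    (J : Set (Set Ordinal.{0})) (hJ : IsIdealOn κ.ord J) (hJbd : boundedIdeal κ.ord ⊆ J)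
    (lamSeq : Ordinal.{0} → Cardinal.{0})
    (hreg : ∀ i < κ.ord, (lamSeq i).IsRegular)
    (hgtκ : ∀ i < κ.ord, Order.succ κ < lamSeq i)
    (hmono : ∀ i < κ.ord, ∀ j < κ.ord, i < j → lamSeq i < lamSeq j)
    (hbelow : ∀ i < κ.ord, lamSeq i < lam)
    (hsupl : ∀ c < lam, ∃ i < κ.ord, c < lamSeq i)
    (f : Ordinal.{0} → Ordinal.{0} → Ordinal.{0})
    (hf : ∀ α < μ.ord, ∀ i < κ.ord, f α i < (lamSeq i).ord)
    (hinc : ∀ α < μ.ord, ∀ β < μ.ord, α < β → ltMod κ.ord J (f α) (f β))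
    (hcofinal : ∀ g : Ordinal.{0} → Ordinal.{0}, (∀ i < κ.ord, g i < (lamSeq i).ord) →
      ∃ α < μ.ord, ltMod κ.ord J g (f α))
    (θ χ : Cardinal.{0}) (hcomp : IsCompleteIdeal θ J) (hκχ : κ ≤ χ)
    (ζ : Ordinal.{0}) (hζ : Order.IsSuccLimit ζ) (hζθ : ζ ≤ θ.ord)
    (hlamval : lam = succIter χ ζ)
    (δ : Ordinal.{0}) (hδμ : δ < μ.ord) (hδ : Order.IsSuccLimit δ)
    (h1 : κ < δ.cof) (h2 : δ.cof < lam)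
    (fstar : Ordinal.{0} → Ordinal.{0}) (hfstar : IsEub κ.ord J δ f fstar)
    (hsmall : {i | i < κ.ord ∧ (fstar i).cof ≤ κ} ∈ J) :
    (δ ∈ Sgd κ lam J f → {i | i < κ.ord ∧ (fstar i).cof ≠ δ.cof} ∈ J) ∧
    (δ ∈ Sbd κ lam J f → ¬ IsWeaklyGoodPt κ.ord J f δ →
      {i | i < κ.ord ∧ χ ≤ (fstar i).cof} ∈ J) := by
  classical
  have hincδ : ∀ α < δ, ∀ β < δ, α < β → ltMod κ.ord J (f α) (f β) :=
    fun α hα β hβ hab => hinc α (hα.trans hδμ) β (hβ.trans hδμ) hab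
  have hZ : {i | i < κ.ord ∧ fstar i = 0} ∈ J := by
    refine hJ.mono _ (hfstar.1 0 hδ.pos) _ ?_
    rintro i ⟨hiκ, hi0⟩
    exact ⟨hiκ, by rw [hi0]; exact zero_le⟩
  constructor
  · intro hgd
    exact cof_eq_of_good hJ hδ h1 hfstar hincδ hgd.2.2.2.2
  · intro _ hnwg
    by_contra hB
    set ν := δ.cof with hν
    have hνreg : ν.IsRegular := Cardinal.isRegular_cof hδ
    set t := {i | i < κ.ord ∧ χ ≤ (fstar i).cof ∧ κ < (fstar i).cof} with htdef
    have htpos : t ∉ J := by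
      intro ht
      apply hB
      refine hJ.mono _ (hJ.union_mem _ ht _ hsmall) _ ?_
      rintro i ⟨hiκ, hiχ⟩
      by_cases hc : κ < (fstar i).cof
      · exact Or.inl ⟨hiκ, hiχ, hc⟩
      · exact Or.inr ⟨hiκ, not_lt.mp hc⟩
    obtain ⟨γ₀, hγ₀ζ, hνγ₀⟩ := lt_succIter_of_lt_limit hζ (by rw [← hlamval]; exact h2)
    -- each level set is in J, by non-weak-goodness
    have hlevel : ∀ γ', {i | i ∈ t ∧ (fstar i).cof = succIter χ γ'} ∈ J := by
      intro γ'
      by_contra hL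
      have hne : {i | i ∈ t ∧ (fstar i).cof = succIter χ γ'}.Nonempty := by
        rcases Set.eq_empty_or_nonempty
          {i | i ∈ t ∧ (fstar i).cof = succIter χ γ'} with he | hne
        · rw [he] at hL; exact absurd hJ.empty_mem hL
        · exact hne
      obtain ⟨i₀, hi₀t, hi₀cof⟩ := hne
      have hκσ : κ < succIter χ γ' := by rw [← hi₀cof]; exact hi₀t.2.2
      have hlim0 : Order.IsSuccLimit (fstar i₀) :=
        Ordinal.aleph0_le_cof.mp (hκ.aleph0_le.trans hi₀t.2.2.le)
      have hσreg : (succIter χ γ').IsRegular :=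
        hi₀cof ▸ Cardinal.isRegular_cof hlim0
      exact hnwg (weaklyGood_of_const_cof hJ hδ h1 hfstar hincδ hσreg hκσ
        (fun i hi => hi.1.1) hL (fun i hi => hi.2))
    -- the bounded part is in J by completeness
    have htbdd : {i | i ∈ t ∧ (fstar i).cof ≤ succIter χ γ₀} ∈ J := by
      set S : Set (Set Ordinal.{0}) :=
        (fun γ' => {i | i ∈ t ∧ (fstar i).cof = succIter χ γ'}) '' (Iic γ₀) with hSdef
      have hSJ : S ⊆ J := by rintro s ⟨γ', _, rfl⟩; exact hlevel γ'
      have hγ₀1ζ : γ₀ + 1 < ζ := by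
        rw [Ordinal.add_one_eq_succ]; exact hζ.succ_lt hγ₀ζ
      have hScard : #S < Cardinal.lift.{1,0} θ := by
        calc #S ≤ #(Iic γ₀) := Cardinal.mk_image_le
          _ ≤ #(Iio (γ₀+1) : Set Ordinal.{0}) := Cardinal.mk_le_mk_of_subset
              (fun x hx => mem_Iio.mpr (lt_of_le_of_lt (mem_Iic.mp hx) (lt_add_one _)))
          _ = Cardinal.lift.{1,0} (γ₀+1).card := Ordinal.mk_Iio_ordinal _
          _ < Cardinal.lift.{1,0} θ := by
              rw [Cardinal.lift_lt, ← Cardinal.lt_ord]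
              exact lt_of_lt_of_le hγ₀1ζ hζθ
      have hUJ : ⋃₀ S ∈ J := hcomp S hSJ hScard
      refine hJ.mono _ hUJ _ ?_
      rintro i ⟨hit, hile⟩
      obtain ⟨γ', hγ'le, hc⟩ := eq_succIter_of_between hit.2.1 hile
      exact ⟨_, ⟨γ', hγ'le, rfl⟩, hit, hc⟩
    -- the remaining part
    set t' := t \ {i | i ∈ t ∧ (fstar i).cof ≤ succIter χ γ₀} with ht'def
    have ht'pos : t' ∉ J := by
      intro h
      exact htpos (hJ.mono _ (hJ.union_mem _ h _ htbdd) _ (fun i hi => by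
        by_cases hc : (fstar i).cof ≤ succIter χ γ₀
        · exact Or.inr ⟨hi, hc⟩
        · exact Or.inl ⟨hi, fun hmem => hc hmem.2⟩))
    have ht'cof : ∀ i ∈ t', ν < (fstar i).cof := by
      rintro i ⟨hit, hibd⟩
      rcases lt_or_ge (succIter χ γ₀) ((fstar i).cof) with h | h
      · exact hνγ₀.trans h
      · exact absurd ⟨hit, h⟩ hibd
    have ht'lim : ∀ i ∈ t', Order.IsSuccLimit (fstar i) := fun i hi =>
      Ordinal.aleph0_le_cof.mp (hκ.aleph0_le.trans hi.1.2.2.le)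
    have ht'reg : ∀ i ∈ t', ((fstar i).cof).IsRegular := fun i hi =>
      Cardinal.isRegular_cof (ht'lim i hi)
    have ht'ordlim : ∀ i ∈ t', Order.IsSuccLimit ((fstar i).cof).ord := fun i hi =>
      Cardinal.isSuccLimit_ord (ht'reg i hi).aleph0_le
    -- cofinal sequences
    obtain ⟨F, hF1, hF2, hF3⟩ := exists_cofinalSeq δ (Ordinal.aleph0_le_cof.2 hδ)
    have hEex : ∀ i, ∃ e : Ordinal.{0} → Ordinal.{0}, i ∈ t' →
        ((∀ ξ < ((fstar i).cof).ord, e ξ < fstar i) ∧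
         (∀ ξ < ((fstar i).cof).ord, ∀ ξ' < ((fstar i).cof).ord, ξ < ξ' → e ξ < e ξ') ∧
         (∀ c < fstar i, ∃ ξ < ((fstar i).cof).ord, c < e ξ)) := by
      intro i
      by_cases hi : i ∈ t'
      · obtain ⟨e, p1, p2, p3⟩ := exists_cofinalSeq (fstar i)
          (hκ.aleph0_le.trans hi.1.2.2.le)
        exact ⟨e, fun _ => ⟨p1, p2, p3⟩⟩
      · exact ⟨fun _ => 0, fun h => absurd h hi⟩
    choose E hE using hEex
    set ζfun : Ordinal.{0} → Ordinal.{0} → Ordinal.{0} :=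
      fun ρ i => sInf {ξ | ξ < ((fstar i).cof).ord ∧ f (F ρ) i < E i ξ} with hζfun
    have hζlt : ∀ ρ i, i ∈ t' → ζfun ρ i + 1 < ((fstar i).cof).ord := by
      intro ρ i hi
      have hlim := ht'ordlim i hi
      rcases Set.eq_empty_or_nonempty
          {ξ | ξ < ((fstar i).cof).ord ∧ f (F ρ) i < E i ξ} with he | hne
      · rw [hζfun]; simp only [he, Ordinal.sInf_empty]
        rw [Ordinal.add_one_eq_succ]
        exact hlim.succ_lt hlim.pos
      · have := csInf_mem hne
        rw [Ordinal.add_one_eq_succ]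
        exact hlim.succ_lt this.1
    set Ξ : Ordinal.{0} → Ordinal.{0} :=
      fun i => Ordinal.bsup.{0,0} ν.ord (fun ρ _ => ζfun ρ i + 1) with hΞ
    have hΞlt : ∀ i ∈ t', Ξ i < ((fstar i).cof).ord := by
      intro i hi
      apply Ordinal.bsup_lt_ord _ (fun ρ _ => hζlt ρ i hi)
      rw [(ht'reg i hi).cof_eq, Cardinal.card_ord]
      exact ht'cof i hi
    set g : Ordinal.{0} → Ordinal.{0} := fun i => if i ∈ t' then E i (Ξ i) else 0 with hg
    have hgJ : {i | i < κ.ord ∧ fstar i ≤ g i} ∈ J := by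
      refine hJ.mono _ hZ _ ?_
      rintro i ⟨hiκ, hile⟩
      refine ⟨hiκ, ?_⟩
      by_cases hi : i ∈ t'
      · rw [hg] at hile; simp only [if_pos hi] at hile
        exact absurd hile (not_le.mpr ((hE i hi).1 _ (hΞlt i hi)))
      · rw [hg] at hile; simp only [if_neg hi] at hile
        exact le_antisymm hile zero_le
    obtain ⟨α, hα, hD⟩ := hfstar.2 g hgJ
    obtain ⟨ρ, hρ, hαF⟩ := hF3 α hα
    have hw1 : {i | i < κ.ord ∧ fstar i ≤ f (F ρ) i} ∈ J := hfstar.1 _ (hF1 ρ hρ)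
    have hw2 : {i | i < κ.ord ∧ f (F ρ) i ≤ f α i} ∈ J :=
      hincδ α hα _ (hF1 ρ hρ) hαF
    apply ht'pos
    refine hJ.mono _ (hJ.union_mem _ (hJ.union_mem _ hD _ hw1) _ hw2) _ ?_
    intro i hi
    have hiκ : i < κ.ord := hi.1.1
    by_cases hc1 : fstar i ≤ f (F ρ) i
    · exact Or.inl (Or.inr ⟨hiκ, hc1⟩)
    by_cases hc2 : f (F ρ) i ≤ f α i
    · exact Or.inr ⟨hiκ, hc2⟩
    refine Or.inl (Or.inl ⟨hiκ, ?_⟩)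
    have hne : ({ξ | ξ < ((fstar i).cof).ord ∧ f (F ρ) i < E i ξ}).Nonempty := by
      obtain ⟨ξ, q1, q2⟩ := (hE i hi).2.2 (f (F ρ) i) (lt_of_not_ge hc1)
      exact ⟨ξ, q1, q2⟩
    have hmem := csInf_mem hne
    have hζΞ : ζfun ρ i < Ξ i :=
      lt_of_lt_of_le (lt_add_one _) (Ordinal.le_bsup (fun ρ _ => ζfun ρ i + 1) ρ hρ)
    have hEmono : E i (ζfun ρ i) < E i (Ξ i) :=
      (hE i hi).2.1 _ hmem.1 _ (hΞlt i hi) hζΞ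
    have : f α i < E i (Ξ i) := ((lt_of_not_ge hc2).trans hmem.2).trans hEmono
    rw [hg]; simp only [if_pos hi]
    exact this.le
end

section
/- In the scale context, if δ ∈ S^gd, then there is a club C of δ such that every α ∈ C with cf(α) > κ belongs to S^gd. -/
open Cardinal Set

/-- Claim 1.10: if `δ` is a good point then there is a club `C` of `δ` all of whose
members of cofinality `> κ` are good points. -/
theorem statement10
    (κ lam μ : Cardinal.{0}) (hκ : κ.IsRegular) (hκlam : κ < lam)
    (hcfl : lam.ord.cof = κ) (hμ : μ = Order.succ lam)
    (J : Set (Set Ordinal.{0})) (hJ : IsIdealOn κ.ord J) (hJbd : boundedIdeal κ.ord ⊆ J)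
    (lamSeq : Ordinal.{0} → Cardinal.{0})
    (hreg : ∀ i < κ.ord, (lamSeq i).IsRegular)
    (hgtκ : ∀ i < κ.ord, Order.succ κ < lamSeq i)
    (hmono : ∀ i < κ.ord, ∀ j < κ.ord, i < j → lamSeq i < lamSeq j)
    (hbelow : ∀ i < κ.ord, lamSeq i < lam)
    (hsupl : ∀ c < lam, ∃ i < κ.ord, c < lamSeq i)
    (f : Ordinal.{0} → Ordinal.{0} → Ordinal.{0})
    (hf : ∀ α < μ.ord, ∀ i < κ.ord, f α i < (lamSeq i).ord)
    (hinc : ∀ α < μ.ord, ∀ β < μ.ord, α < β → ltMod κ.ord J (f α) (f β))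
    (hcofinal : ∀ g : Ordinal.{0} → Ordinal.{0}, (∀ i < κ.ord, g i < (lamSeq i).ord) →
      ∃ α < μ.ord, ltMod κ.ord J g (f α))
    (δ : Ordinal.{0}) (hδ : δ ∈ Sgd κ lam J f) :
    ∃ C : Set Ordinal.{0}, IsClubIn C δ ∧
      ∀ α ∈ C, κ < α.cof → α ∈ Sgd κ lam J f := by
  obtain ⟨hδμ, hδlim, hκcf, hcflam, A, hAsub, hAunb, s, hsJ, hincA⟩ := hδ
  refine ⟨{α | α < δ ∧ 0 < α ∧ ∀ β < α, ∃ a ∈ A, β < a ∧ a < α}, ⟨fun α hα => hα.1, ?_, ?_⟩, ?_⟩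
  · -- unboundedness
    intro β hβ
    let next : Ordinal → Ordinal := fun x => if hx : x < δ then (hAunb x hx).choose else 0
    have hnext : ∀ x, x < δ → next x ∈ A ∧ x < next x := by
      intro x hx
      simp only [next, dif_pos hx]
      obtain ⟨h1, h2⟩ := (hAunb x hx).choose_spec
      exact ⟨h1, h2⟩
    let g : ℕ → Ordinal := fun n => Nat.rec (next β) (fun _ ih => next ih) n
    have hgA : ∀ n, g n ∈ A := by
      intro n
      induction n with
      | zero => exact (hnext β hβ).1
      | succ n ih => exact (hnext (g n) (hAsub ih)).1
    have hglt : ∀ n, g n < g (n + 1) := fun n => (hnext (g n) (hAsub (hgA n))).2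
    have hgδ : ∀ n, g n < δ := fun n => hAsub (hgA n)
    have hγδ : (⨆ n, g n) < δ := by
      apply Ordinal.iSup_lt_ord _ hgδ
      rw [Cardinal.mk_eq_aleph0 ℕ]
      exact lt_of_le_of_lt hκ.1 hκcf
    have hle : ∀ n, g n ≤ ⨆ n, g n := fun n => Ordinal.le_iSup g n
    have hβg : β < ⨆ n, g n := lt_of_lt_of_le (hnext β hβ).2 (hle 0)
    refine ⟨⨆ n, g n, ⟨hγδ, lt_of_le_of_lt (zero_le (a := β)) hβg, ?_⟩, hβg⟩
    intro β' hβ'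
    obtain ⟨n, hn⟩ := Ordinal.lt_iSup_iff.mp hβ'
    exact ⟨g n, hgA n, hn, lt_of_lt_of_le (hglt n) (hle (n + 1))⟩
  · -- closedness
    intro α hαδ hα0 hcl
    refine ⟨hαδ, hα0, fun β hβ => ?_⟩
    obtain ⟨γ, hγC, hβγ, hγα⟩ := hcl β hβ
    obtain ⟨a, haA, hβa, haγ⟩ := hγC.2.2 β hβγ
    exact ⟨a, haA, hβa, haγ.trans hγα⟩
  · -- members of cofinality > κ are good
    rintro α ⟨hαδ, hα0, hαub⟩ hκα
    have hαlim : Order.IsSuccLimit α := by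
      refine Ordinal.isSuccLimit_iff.mpr ⟨hα0.ne', Order.isSuccPrelimit_of_succ_lt fun b hb => ?_⟩
      obtain ⟨a, _, hba, haα⟩ := hαub b hb
      exact lt_of_le_of_lt (Order.succ_le_of_lt hba) haα
    have hcfreg : (α.cof).IsRegular := Cardinal.isRegular_cof hαlim
    have hαμ : α < (Order.succ lam).ord := hαδ.trans hδμ
    have hcflt : α.cof < lam := by
      have h1 : α.cof ≤ lam := by
        have := Ordinal.cof_le_card α
        have h2 : α.card ≤ lam := Order.lt_succ_iff.mp (Cardinal.lt_ord.mp hαμ)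
        exact this.trans h2
      rcases lt_or_eq_of_le h1 with h | h
      · exact h
      · exfalso
        have : lam ≤ κ := by
          have := hcfreg.2
          rw [h] at this
          rwa [hcfl] at this
        exact absurd hκlam (not_lt.mpr this)
    refine ⟨hαμ, hαlim, hκα, hcflt, A ∩ Iio α, inter_subset_right, ?_, s,
      fun a ha => hsJ a ha.1, ?_⟩
    · intro β hβ
      obtain ⟨a, haA, hβa, haα⟩ := hαub β hβ
      exact ⟨a, ⟨haA, haα⟩, hβa⟩
    · intro i hi a ha b hb hab hia hib
      exact hincA i hi a ha.1 b hb.1 hab hia hib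
end

section
/- In the scale context, if δ ∈ S^ch, then there is a club C of δ such that every α ∈ C with cf(α) > κ belongs to S^ch. -/
open Cardinal Set

/-- Auxiliary: the set of "limit points" of a progressive function is club. -/
theorem myClubOfNext (δ : Ordinal.{0}) (hδ : Cardinal.aleph0 < δ.cof)
    (next : Ordinal → Ordinal) (hnext : ∀ γ < δ, γ < next γ ∧ next γ < δ) :
    IsClubIn {α | α < δ ∧ ∀ γ < α, ∃ γ', γ < γ' ∧ γ' < α ∧ next γ' < α} δ := by
  have hδlim : Order.IsSuccLimit δ := Ordinal.aleph0_le_cof.mp hδ.le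
  refine ⟨fun α hα => hα.1, ?_, ?_⟩
  · intro β hβ
    set b : ℕ → Ordinal := fun n => Nat.rec (β + 1) (fun _ ih => next ih) n with hb
    have hbs : ∀ n, b (n + 1) = next (b n) := fun n => rfl
    have hblt : ∀ n, b n < δ ∧ b n < b (n + 1) := by
      intro n
      induction n with
      | zero => exact ⟨hδlim.succ_lt hβ, (hnext _ (hδlim.succ_lt hβ)).1⟩
      | succ n ih =>
        have h2 := hnext _ ih.1
        rw [hbs] at *
        exact ⟨h2.2, (hnext _ h2.2).1⟩
    have hslt : (⨆ n, b n) < δ := by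
      apply Ordinal.iSup_lt_ord ?_ (fun n => (hblt n).1)
      rwa [Cardinal.mk_nat]
    refine ⟨⨆ n, b n, ⟨hslt, ?_⟩, ?_⟩
    · intro γ hγ
      obtain ⟨n, hn⟩ := Ordinal.lt_iSup_iff.mp hγ
      refine ⟨b n, hn, lt_of_lt_of_le (hblt n).2 (Ordinal.le_iSup _ _), ?_⟩
      rw [← hbs]
      exact lt_of_lt_of_le (hblt (n + 1)).2 (Ordinal.le_iSup _ _)
    · calc β < β + 1 := lt_add_one β
        _ ≤ ⨆ n, b n := Ordinal.le_iSup b 0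
  · intro α hα h0 hcl
    refine ⟨hα, fun γ hγ => ?_⟩
    obtain ⟨c, hc, hγc, hcα⟩ := hcl γ hγ
    obtain ⟨γ', h1, h2, h3⟩ := hc.2 γ hγc
    exact ⟨γ', h1, h2.trans hcα, h3.trans hcα⟩

theorem myLtModD_trans {κo : Ordinal.{0}} {D : Set (Set Ordinal)}
    (hD : IsUltrafilterOn κo D) {f g h : Ordinal → Ordinal}
    (h1 : ltModD κo D f g) (h2 : ltModD κo D g h) : ltModD κo D f h := by
  have hm := hD.inter_mem _ h1 _ h2
  refine hD.superset_mem _ hm _ (fun i hi => hi.1) ?_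
  rintro i ⟨⟨hiκ, ha⟩, ⟨-, hb⟩⟩
  exact ⟨hiκ, ha.trans hb⟩

theorem myD_of_J {κo : Ordinal.{0}} {J D : Set (Set Ordinal)}
    (hD : IsUltrafilterOn κo D) (hDJ : ∀ s ∈ J, s ∉ D)
    {f g : Ordinal → Ordinal} (h : ltMod κo J f g) : ltModD κo D f g := by
  rcases hD.ultra {i | i < κo ∧ f i < g i} (fun i hi => hi.1) with h' | h'
  · exact h'
  · exfalso
    refine hDJ _ h ?_
    convert h' using 1
    ext i
    simp only [Set.mem_setOf_eq, Set.mem_diff, Set.mem_Iio, not_and, not_lt]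
    exact ⟨fun ⟨h1, h2⟩ => ⟨h1, fun _ => h2⟩, fun ⟨h1, h2⟩ => ⟨h1, h2 h1⟩⟩

/-- Claim 1.11: if `δ` is a chaotic point then there is a club `C` of `δ` all of whose
members of cofinality `> κ` are chaotic points. -/
theorem statement11
    (κ lam μ : Cardinal.{0}) (hκ : κ.IsRegular) (hκlam : κ < lam)
    (hcfl : lam.ord.cof = κ) (hμ : μ = Order.succ lam)
    (J : Set (Set Ordinal.{0})) (hJ : IsIdealOn κ.ord J) (hJbd : boundedIdeal κ.ord ⊆ J)
    (lamSeq : Ordinal.{0} → Cardinal.{0})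
    (hreg : ∀ i < κ.ord, (lamSeq i).IsRegular)
    (hgtκ : ∀ i < κ.ord, Order.succ κ < lamSeq i)
    (hmono : ∀ i < κ.ord, ∀ j < κ.ord, i < j → lamSeq i < lamSeq j)
    (hbelow : ∀ i < κ.ord, lamSeq i < lam)
    (hsupl : ∀ c < lam, ∃ i < κ.ord, c < lamSeq i)
    (f : Ordinal.{0} → Ordinal.{0} → Ordinal.{0})
    (hf : ∀ α < μ.ord, ∀ i < κ.ord, f α i < (lamSeq i).ord)
    (hinc : ∀ α < μ.ord, ∀ β < μ.ord, α < β → ltMod κ.ord J (f α) (f β))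
    (hcofinal : ∀ g : Ordinal.{0} → Ordinal.{0}, (∀ i < κ.ord, g i < (lamSeq i).ord) →
      ∃ α < μ.ord, ltMod κ.ord J g (f α))
    (δ : Ordinal.{0}) (hδ : δ ∈ Sch κ lam J f) :
    ∃ C : Set Ordinal.{0}, IsClubIn C δ ∧
      ∀ α ∈ C, κ < α.cof → α ∈ Sch κ lam J f := by
  obtain ⟨hδμ, hδlim, hδcof1, hδcof2, hch⟩ := hδ
  have hℵκ : Cardinal.aleph0 ≤ κ := hκ.aleph0_le
  have hδcofℵ : Cardinal.aleph0 < δ.cof := lt_of_le_of_lt hℵκ hδcof1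
  have hbook : ∀ α < δ, κ < α.cof → IsChaoticPt κ.ord J f α → α ∈ Sch κ lam J f := by
    intro α hαδ hαcof hchα
    refine ⟨hαδ.trans hδμ, ?_, hαcof, ?_, hchα⟩
    · exact Ordinal.aleph0_le_cof.mp (hℵκ.trans hαcof.le)
    · have hcard : α.card ≤ lam := Order.lt_succ_iff.mp (Cardinal.lt_ord.mp (hαδ.trans hδμ))
      refine lt_of_le_of_ne ((Ordinal.cof_le_card α).trans hcard) ?_
      intro h
      have h2 := Ordinal.cof_cof α
      rw [h, hcfl] at h2
      exact hκlam.ne h2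
  rcases hch with ⟨D, hD, hDJ, a, ha, hmain⟩ | ⟨A, hA1, hA2, g, hAg⟩
  · choose! next hn1 hn2 hwit using hmain
    refine ⟨_, myClubOfNext δ hδcofℵ next (fun γ hγ => ⟨hn1 γ hγ, hn2 γ hγ⟩), ?_⟩
    intro α hα hαcof
    refine hbook α hα.1 hαcof ?_
    left
    refine ⟨D, hD, hDJ, a, ha, ?_⟩
    intro γ hγ
    obtain ⟨γ', h1, h2, h3⟩ := hα.2 γ hγ
    have hγ'δ : γ' < δ := h2.trans hα.1
    obtain ⟨g0, hg0a, hg01, hg02⟩ := hwit γ' hγ'δ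
    refine ⟨next γ', h1.trans (hn1 γ' hγ'δ), h3, g0, hg0a, ?_, hg02⟩
    have hγμ : γ < μ.ord := by
      rw [hμ]; exact ((hγ.trans hα.1).trans hδμ)
    have hγ'μ : γ' < μ.ord := by
      rw [hμ]; exact (hγ'δ.trans hδμ)
    exact myLtModD_trans hD (myD_of_J hD hDJ (hinc γ hγμ γ' hγ'μ h1)) hg01
  · choose! next hnA hn1 using hA2
    have hnext : ∀ γ < δ, γ < next γ ∧ next γ < δ :=
      fun γ h => ⟨hn1 γ h, hA1 (hnA γ h)⟩
    refine ⟨_, myClubOfNext δ hδcofℵ next hnext, ?_⟩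
    intro α hα hαcof
    refine hbook α hα.1 hαcof ?_
    right
    refine ⟨A ∩ Iio α, fun x hx => hx.2, ?_, g, ?_⟩
    · intro β hβ
      obtain ⟨γ', h1, h2, h3⟩ := hα.2 β hβ
      have hγ'δ : γ' < δ := h2.trans hα.1
      exact ⟨next γ', ⟨hnA γ' hγ'δ, h3⟩, h1.trans (hn1 γ' hγ'δ)⟩
    · intro x hx y hy hxy
      exact hAg x hx.1 y hy.1 hxy
end
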